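/- arXiv:2504.04016 — 2 statements merged into one kernel-verified Lean document; each statement's English description precedes it below -/
import Mathlib

section
/- Sufficient decrease of the proximal gradient iteration: assume W has at least one nonzero entry and define L_x = (max over observed entries of X minus min over observed entries of X)^2, L_w = max_j (Σ_i W_{ij})/n1 + max_i (Σ_j W_{ij})/n2, and L_f = L_x L_w / 2. Let μ > L_f, let M_0 satisfy ‖M_0‖_∞ ≤ α, and define the iterates M_{k+1} = S_{λ/μ,α}(M_k − ∇L(M_k)/μ) and objective values F_k = L(M_k) + λ‖M_k‖_*. Then for every k ≥ 0, F_k − F_{k+1} ≥ ((μ − L_f)/2) ‖M_k − M_{k+1}‖_F². -/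
open scoped BigOperators Classical
open MeasureTheory ProbabilityTheory Matrix

noncomputable section

namespace NMC

/-- Real `n1 × n2` matrices. -/
abbrev Mat (n1 n2 : ℕ) := Matrix (Fin n1) (Fin n2) ℝ

variable {n1 n2 : ℕ}

/-- The pairwise pseudo-log-likelihood loss
`l_{i1j1,i2j2}(m1,m2) = log(1 + exp(−(x1 − x2)(m1 − m2)))`. -/
def pl (x1 x2 m1 m2 : ℝ) : ℝ := Real.log (1 + Real.exp (-((x1 - x2) * (m1 - m2))))

/-- The row- and column-wise matrix U-statistic loss `L(M)`. -/
def lossL (X W M : Mat n1 n2) : ℝ :=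
  (1 / (n2 : ℝ)) * ∑ i : Fin n1, ∑ j1 : Fin n2, ∑ j2 : Fin n2,
      W i j1 * W i j2 * pl (X i j1) (X i j2) (M i j1) (M i j2) +
  (1 / (n1 : ℝ)) * ∑ j : Fin n2, ∑ i1 : Fin n1, ∑ i2 : Fin n1,
      W i1 j * W i2 j * pl (X i1 j) (X i2 j) (M i1 j) (M i2 j)

/-- Update a single entry of a matrix. -/
def updEntry (M : Mat n1 n2) (i : Fin n1) (j : Fin n2) (t : ℝ) : Mat n1 n2 :=
  fun i' j' => if i' = i ∧ j' = j then t else M i' j'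

/-- The gradient matrix `∇L(M)`, whose `(i,j)` entry is the partial derivative
`∂L(M)/∂m_{ij}`. -/
def gradL (X W M : Mat n1 n2) : Mat n1 n2 :=
  fun i j => deriv (fun t => lossL X W (updEntry M i j t)) (M i j)

/-- Frobenius norm. -/
def frobNorm (A : Mat n1 n2) : ℝ := Real.sqrt (∑ i, ∑ j, A i j ^ 2)

/-- Entrywise sup norm `‖A‖_∞ = max_{i,j} |a_{ij}|`. -/
def infNorm (A : Mat n1 n2) : ℝ := sSup (Set.range fun p : Fin n1 × Fin n2 => |A p.1 p.2|)

/-- The (unsorted) singular values of `A`: square roots of eigenvalues of `Aᴴ A`. -/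
def svalsUnsorted (A : Mat n1 n2) : Fin n2 → ℝ :=
  fun k => Real.sqrt ((Matrix.isHermitian_conjTranspose_mul_self A).eigenvalues k)

/-- Nuclear norm `‖A‖_*`: sum of the singular values. -/
def nuclNorm (A : Mat n1 n2) : ℝ := ∑ k, svalsUnsorted A k

/-- `sval A k` is the `k`-th largest singular value of `A` (1-indexed), `σ_k(A)`. -/
def sval (A : Mat n1 n2) (k : ℕ) : ℝ :=
  if h : 1 ≤ k ∧ k ≤ n2 then
    svalsUnsorted A (Tuple.sort (svalsUnsorted A) ⟨n2 - k, by omega⟩)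
  else 0

/-- Spectral norm `‖A‖ = σ_1(A)`. -/
def specNorm (A : Mat n1 n2) : ℝ := sval A 1

/-- Tail sum of singular values `Σ_{k=r}^{n1 ∧ n2} σ_k(A)`. -/
def tailSum (A : Mat n1 n2) (r : ℕ) : ℝ := ∑ k ∈ Finset.Icc r (min n1 n2), sval A k

/-- Mean of the entries of a matrix, `M_m(A) = 1ᵀ A 1/(n1 n2)`. -/
def matMean (A : Mat n1 n2) : ℝ := (∑ i, ∑ j, A i j) / ((n1 : ℝ) * (n2 : ℝ))

/-- `M ⊕ c = M + c 1 1ᵀ`. -/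
def oplus (M : Mat n1 n2) (c : ℝ) : Mat n1 n2 := fun i j => M i j + c

/-- The weights `𝒲_{i1j1,i2j2}`. -/
def wgt (al : ℝ) (X W : Mat n1 n2) (i1 : Fin n1) (j1 : Fin n2) (i2 : Fin n1) (j2 : Fin n2) : ℝ :=
  W i1 j1 * W i2 j2 * (X i1 j1 - X i2 j2) ^ 2 /
    (4 + 2 * Real.exp (2 * al * (X i1 j1 - X i2 j2)) +
      2 * Real.exp (2 * al * (X i2 j2 - X i1 j1)))

/-- The sample semi-norm squared `D_s²(M)`. -/
def Ds2 (al : ℝ) (X W M : Mat n1 n2) : ℝ :=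
  (1 / (n2 : ℝ)) * ∑ i : Fin n1, ∑ j1 : Fin n2, ∑ j2 : Fin n2,
      (M i j1 - M i j2) ^ 2 * wgt al X W i j1 i j2 +
  (1 / (n1 : ℝ)) * ∑ j : Fin n2, ∑ i1 : Fin n1, ∑ i2 : Fin n1,
      (M i1 j - M i2 j) ^ 2 * wgt al X W i1 j i2 j

/-- The population semi-norm squared `D²(M)` (all weights equal to 1). -/
def D2 (M : Mat n1 n2) : ℝ :=
  (1 / (n2 : ℝ)) * ∑ i : Fin n1, ∑ j1 : Fin n2, ∑ j2 : Fin n2, (M i j1 - M i j2) ^ 2 +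
  (1 / (n1 : ℝ)) * ∑ j : Fin n2, ∑ i1 : Fin n1, ∑ i2 : Fin n1, (M i1 j - M i2 j) ^ 2

/-- `L_x`: squared range of the observed entries of `X`. -/
def Lx (X W : Mat n1 n2) : ℝ :=
  (sSup {x : ℝ | ∃ p : Fin n1 × Fin n2, W p.1 p.2 = 1 ∧ x = X p.1 p.2} -
    sInf {x : ℝ | ∃ p : Fin n1 × Fin n2, W p.1 p.2 = 1 ∧ x = X p.1 p.2}) ^ 2

/-- `L_w = max_j (Σ_i W_{ij})/n1 + max_i (Σ_j W_{ij})/n2`. -/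
def Lw (W : Mat n1 n2) : ℝ :=
  sSup (Set.range fun j : Fin n2 => ∑ i, W i j) / (n1 : ℝ) +
  sSup (Set.range fun i : Fin n1 => ∑ j, W i j) / (n2 : ℝ)

/-- `L_f = L_x L_w / 2`, the Lipschitz constant of `∇L`. -/
def Lf (X W : Mat n1 n2) : ℝ := Lx X W * Lw W / 2

/-- The objective of the proximal problem defining `S_{lam,al}(A)`. -/
def proxObj (lam : ℝ) (A Y : Mat n1 n2) : ℝ := 1 / 2 * frobNorm (Y - A) ^ 2 + lam * nuclNorm Y

/-- `IsProx lam al A Y` states that `Y = S_{lam,al}(A)`, i.e. `Y` minimizes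
`(1/2)‖Y − A‖_F² + lam ‖Y‖_*` over `{Y : ‖Y‖_∞ ≤ al}`. -/
def IsProx (lam al : ℝ) (A Y : Mat n1 n2) : Prop :=
  infNorm Y ≤ al ∧ ∀ Z : Mat n1 n2, infNorm Z ≤ al → proxObj lam A Y ≤ proxObj lam A Z

/-- The penalized objective `F(M) = L(M) + lam ‖M‖_*`. -/
def objF (X W : Mat n1 n2) (lam : ℝ) (M : Mat n1 n2) : ℝ := lossL X W M + lam * nuclNorm M

/-- `Mh` is a minimizer of `L(M) + lam ‖M‖_*` over `{M : ‖M‖_∞ ≤ al}`. -/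
def IsMin (X W : Mat n1 n2) (lam al : ℝ) (Mh : Mat n1 n2) : Prop :=
  infNorm Mh ≤ al ∧ ∀ M : Mat n1 n2, infNorm M ≤ al → objF X W lam Mh ≤ objF X W lam M

/-- `c` minimizes `c' ↦ ‖M ⊕ c'‖_*`; then `T(M) = M ⊕ c`. -/
def IsMinShift (M : Mat n1 n2) (c : ℝ) : Prop :=
  ∀ c' : ℝ, nuclNorm (oplus M c) ≤ nuclNorm (oplus M c')

/-- `U` and `V` have as columns top-`r` left and right singular vectors of `A`. -/
def IsTopSVD (r : ℕ) (A : Mat n1 n2) (U : Matrix (Fin n1) (Fin r) ℝ)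
    (V : Matrix (Fin n2) (Fin r) ℝ) : Prop :=
  Uᵀ * U = 1 ∧ Vᵀ * V = 1 ∧
  A * V = U * Matrix.diagonal (fun k : Fin r => sval A (k.1 + 1)) ∧
  Aᵀ * U = V * Matrix.diagonal (fun k : Fin r => sval A (k.1 + 1))

/-- A choice of top-`r` left and right singular vector matrices of `A`. -/
def UVchoice (r : ℕ) (A : Mat n1 n2) :
    Matrix (Fin n1) (Fin r) ℝ × Matrix (Fin n2) (Fin r) ℝ :=
  if h : ∃ p : Matrix (Fin n1) (Fin r) ℝ × Matrix (Fin n2) (Fin r) ℝ,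
      IsTopSVD r A p.1 p.2 then h.choose else (0, 0)

/-- `Θ2 = (I − UUᵀ)(Θ ⊖ M_m(Θ))(I − VVᵀ)`, with `U,V` top-`r` singular vectors of
`M* ⊕ M_m(Θ)`. -/
def theta2 (Mstar : Mat n1 n2) (r : ℕ) (Θ : Mat n1 n2) : Mat n1 n2 :=
  (1 - (UVchoice r (oplus Mstar (matMean Θ))).1 * (UVchoice r (oplus Mstar (matMean Θ))).1ᵀ) *
    oplus Θ (-matMean Θ) *
  (1 - (UVchoice r (oplus Mstar (matMean Θ))).2 * (UVchoice r (oplus Mstar (matMean Θ))).2ᵀ)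

/-- `Θ1 = Θ ⊖ M_m(Θ) − Θ2`. -/
def theta1 (Mstar : Mat n1 n2) (r : ℕ) (Θ : Mat n1 n2) : Mat n1 n2 :=
  oplus Θ (-matMean Θ) - theta2 Mstar r Θ

/-- The cone `C_r = {Θ : ‖Θ2‖_* ≤ 4 Σ_{k=r}^{n1∧n2} σ_k(M*) + 3‖Θ1‖_*}`. -/
def coneC (Mstar : Mat n1 n2) (r : ℕ) : Set (Mat n1 n2) :=
  {Θ | nuclNorm (theta2 Mstar r Θ) ≤ 4 * tailSum Mstar r + 3 * nuclNorm (theta1 Mstar r Θ)}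

/-- Euclidean norm of a vector. -/
def euclNorm {n : ℕ} (v : Fin n → ℝ) : ℝ := Real.sqrt (∑ i, v i ^ 2)

/-- The quantity `𝔅(M*)` of Theorem 4, computed from `T(M*) = M* ⊕ cstar`. -/
def Bconst (Mstar : Mat n1 n2) (cstar : ℝ) : ℝ :=
  euclNorm ((1 - (UVchoice (oplus Mstar cstar).rank (oplus Mstar cstar)).1 *
        (UVchoice (oplus Mstar cstar).rank (oplus Mstar cstar)).1ᵀ).mulVec fun _ => (1 : ℝ)) *
    euclNorm ((1 - (UVchoice (oplus Mstar cstar).rank (oplus Mstar cstar)).2 *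
        (UVchoice (oplus Mstar cstar).rank (oplus Mstar cstar)).2ᵀ).mulVec fun _ => (1 : ℝ)) /
      Real.sqrt ((n1 : ℝ) * (n2 : ℝ)) -
  Real.sqrt ((n1 : ℝ) * (n2 : ℝ)) *
    |matMean ((UVchoice (oplus Mstar cstar).rank (oplus Mstar cstar)).1 *
      (UVchoice (oplus Mstar cstar).rank (oplus Mstar cstar)).2ᵀ)|

/-- The log-normalization function `b(m) = log ∫ exp(x m + f(x)) dν(x)`. -/
def bFun (ν : Measure ℝ) (f : ℝ → ℝ) (m : ℝ) : ℝ :=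
  Real.log ((∫⁻ x, ENNReal.ofReal (Real.exp (x * m + f x)) ∂ν).toReal)

/-- The random variables `Z̃_{i1j1,i2j2}` of the conditional sub-Gaussian condition. -/
def Ztil {Ω : Type} (Mstar : Mat n1 n2) (X : Ω → Mat n1 n2)
    (i1 : Fin n1) (j1 : Fin n2) (i2 : Fin n1) (j2 : Fin n2) (ω : Ω) : ℝ :=
  (X ω i1 j1 - X ω i2 j2) /
    (2 + Real.exp ((X ω i1 j1 - X ω i2 j2) * (Mstar i1 j1 - Mstar i2 j2)) +
      Real.exp (-((X ω i1 j1 - X ω i2 j2) * (Mstar i1 j1 - Mstar i2 j2))))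

/-- `π_U = max_{i,j} P(W_{ij} = 1)`. -/
def piU {Ω : Type} [MeasurableSpace Ω] (P : Measure Ω) (W : Ω → Mat n1 n2) : ℝ :=
  sSup (Set.range fun p : Fin n1 × Fin n2 => (P {ω | W ω p.1 p.2 = 1}).toReal)

/-- `π_L = min_{i,j} P(W_{ij} = 1)`. -/
def piL {Ω : Type} [MeasurableSpace Ω] (P : Measure Ω) (W : Ω → Mat n1 n2) : ℝ :=
  sInf (Set.range fun p : Fin n1 × Fin n2 => (P {ω | W ω p.1 p.2 = 1}).toReal)

/-- Rectangular diagonal matrix with diagonal entries `d 0, d 1, …`. -/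
def rectDiag (n1 n2 : ℕ) (d : ℕ → ℝ) : Mat n1 n2 :=
  fun i j => if (i : ℕ) = (j : ℕ) then d (i : ℕ) else 0

/-! ### Auxiliary development for `statement0` -/

def rfun (c s : ℝ) : ℝ := Real.log (1 + Real.exp (-(c * s)))
def gfun (c s : ℝ) : ℝ := -c / (1 + Real.exp (c * s))

lemma one_add_exp_pos (x : ℝ) : 0 < 1 + Real.exp x := by positivity

lemma hasDerivAt_rfun (c s : ℝ) : HasDerivAt (rfun c) (gfun c s) s := by
  have h1 : HasDerivAt (fun s : ℝ => -(c * s)) (-c) s := by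
    simpa using ((hasDerivAt_id s).const_mul c).fun_neg
  have h2 : HasDerivAt (fun s : ℝ => 1 + Real.exp (-(c * s)))
      (Real.exp (-(c * s)) * (-c)) s := ((h1.exp)).const_add 1
  have h3 : HasDerivAt (rfun c) ((Real.exp (-(c * s)) * (-c)) / (1 + Real.exp (-(c*s)))) s := by
    refine h2.log (ne_of_gt (one_add_exp_pos _))
  convert h3 using 1
  unfold gfun
  rw [div_eq_div_iff (ne_of_gt (one_add_exp_pos _)) (ne_of_gt (one_add_exp_pos _))]
  have h4 : Real.exp (-(c*s)) * Real.exp (c*s) = 1 := by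
    rw [← Real.exp_add]; simp
  linear_combination c * h4

lemma hasDerivAt_gfun (c s : ℝ) :
    HasDerivAt (gfun c) (c * Real.exp (c * s) * c / (1 + Real.exp (c * s)) ^ 2) s := by
  have h1 : HasDerivAt (fun s : ℝ => 1 + Real.exp (c * s)) (Real.exp (c * s) * c) s := by
    simpa using (((hasDerivAt_id s).const_mul c).exp).const_add 1
  have h2 := (h1.inv (ne_of_gt (one_add_exp_pos _))).const_mul (-c)
  have heq : gfun c = fun s => -c * (1 + Real.exp (c * s))⁻¹ := by
    funext s; rw [gfun, div_eq_mul_inv]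
  rw [heq]
  refine h2.congr_deriv ?_
  ring

lemma gfun_deriv_abs_le (c s : ℝ) :
    |c * Real.exp (c * s) * c / (1 + Real.exp (c * s)) ^ 2| ≤ c ^ 2 / 4 := by
  have he : 0 < Real.exp (c * s) := Real.exp_pos _
  rw [abs_div, abs_of_nonneg (by positivity : (0:ℝ) ≤ (1 + Real.exp (c*s))^2)]
  rw [div_le_div_iff₀ (by positivity) (by norm_num)]
  have : |c * Real.exp (c*s) * c| = c^2 * Real.exp (c*s) := by
    rw [abs_of_nonneg (by nlinarith [mul_nonneg (sq_nonneg c) (Real.exp_pos (c*s)).le])]; ring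
  rw [this]
  nlinarith [sq_nonneg (1 - Real.exp (c*s)), sq_nonneg c, mul_nonneg (sq_nonneg c) (sq_nonneg (1 - Real.exp (c*s)))]

lemma gfun_lipschitz (c a b : ℝ) : |gfun c b - gfun c a| ≤ c ^ 2 / 4 * |b - a| := by
  have hdiff : ∀ x ∈ (Set.univ : Set ℝ), DifferentiableAt ℝ (gfun c) x :=
    fun x _ => (hasDerivAt_gfun c x).differentiableAt
  have hb : ∀ x ∈ (Set.univ : Set ℝ), ‖deriv (gfun c) x‖ ≤ c ^ 2 / 4 := by
    intro x _
    rw [(hasDerivAt_gfun c x).deriv]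
    exact gfun_deriv_abs_le c x
  simpa using convex_univ.norm_image_sub_le_of_norm_deriv_le hdiff hb (Set.mem_univ a) (Set.mem_univ b)

lemma rfun_taylor (c a b : ℝ) :
    rfun c b ≤ rfun c a + gfun c a * (b - a) + c ^ 2 * (b - a) ^ 2 / 8 := by
  set q : ℝ → ℝ := fun s => rfun c a + gfun c a * (s - a) + c ^ 2 * (s - a) ^ 2 / 8 - rfun c s with hq
  have hqa : q a = 0 := by simp [hq]
  have hd : ∀ s, HasDerivAt q (gfun c a + c ^ 2 * (s - a) / 4 - gfun c s) s := by
    intro s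
    have h1 : HasDerivAt (fun s : ℝ => rfun c a + gfun c a * (s - a) + c ^ 2 * (s - a) ^ 2 / 8)
        (gfun c a + c ^ 2 * (s - a) / 4) s := by
      have ha : HasDerivAt (fun s : ℝ => s - a) 1 s := (hasDerivAt_id s).sub_const a
      have h2 : HasDerivAt (fun s : ℝ => gfun c a * (s - a)) (gfun c a) s := by
        simpa using ha.const_mul (gfun c a)
      have h3 : HasDerivAt (fun s : ℝ => c ^ 2 * (s - a) ^ 2 / 8)
          (c ^ 2 * (2 * (s - a)) / 8) s := by
        have := ((ha.pow 2).const_mul (c ^ 2)).div_const 8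
        simpa [mul_comm, mul_assoc, mul_left_comm] using this
      have := (h2.const_add (rfun c a)).add h3
      exact this.congr_deriv (by ring)
    simpa using h1.fun_sub (hasDerivAt_rfun c s)
  have key : 0 ≤ q b := by
    rcases le_total a b with hab | hab
    · have hmono : MonotoneOn q (Set.Icc a b) := by
        apply monotoneOn_of_deriv_nonneg (convex_Icc a b)
          (Continuous.continuousOn
            (Differentiable.continuous (fun s => (hd s).differentiableAt)))
          (fun s _ => ((hd s).differentiableAt).differentiableWithinAt)
        intro s hs
        rw [(hd s).deriv]
        have : s ∈ Set.Icc a b := interior_subset hs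
        have hsa : a ≤ s := this.1
        have habs : |gfun c a - gfun c s| ≤ c ^ 2 / 4 * (s - a) := by
          have h := gfun_lipschitz c s a
          rwa [abs_sub_comm a s, abs_of_nonneg (by linarith : (0:ℝ) ≤ s - a)] at h
        have := abs_le.mp habs
        linarith [this.1]
      have := hmono (Set.left_mem_Icc.mpr hab) (Set.right_mem_Icc.mpr hab) hab
      linarith [hqa ▸ this]
    · have hanti : AntitoneOn q (Set.Icc b a) := by
        apply antitoneOn_of_deriv_nonpos (convex_Icc b a)
          (Continuous.continuousOn
            (Differentiable.continuous (fun s => (hd s).differentiableAt)))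
          (fun s _ => ((hd s).differentiableAt).differentiableWithinAt)
        intro s hs
        rw [(hd s).deriv]
        have : s ∈ Set.Icc b a := interior_subset hs
        have hsa : s ≤ a := this.2
        have habs : |gfun c a - gfun c s| ≤ c ^ 2 / 4 * (a - s) := by
          have h := gfun_lipschitz c s a
          rwa [abs_of_nonneg (by linarith : (0:ℝ) ≤ a - s)] at h
        have := abs_le.mp habs
        linarith [this.2]
      have := hanti (Set.left_mem_Icc.mpr hab) (Set.right_mem_Icc.mpr hab) hab
      linarith [hqa ▸ this]
  simp only [hq] at key
  linarith

lemma pl_eq_rfun (x1 x2 m1 m2 : ℝ) : pl x1 x2 m1 m2 = rfun (x1 - x2) (m1 - m2) := rfl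

/-- Row-type loss block. -/
def rowLf (X W M : Mat n1 n2) : ℝ :=
  ∑ i : Fin n1, ∑ j1 : Fin n2, ∑ j2 : Fin n2,
    W i j1 * W i j2 * pl (X i j1) (X i j2) (M i j1) (M i j2)

lemma lossL_eq_rows (X W M : Mat n1 n2) :
    lossL X W M = (1 / (n2 : ℝ)) * rowLf X W M + (1 / (n1 : ℝ)) * rowLf Xᵀ Wᵀ Mᵀ := by
  simp only [lossL, rowLf, Matrix.transpose_apply]

/-- Row-block gradient contribution. -/
def rowG (X W M : Mat n1 n2) (i : Fin n1) (j : Fin n2) : ℝ :=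
  (∑ j2, W i j * W i j2 * gfun (X i j - X i j2) (M i j - M i j2)) -
  (∑ j1, W i j1 * W i j * gfun (X i j1 - X i j) (M i j1 - M i j))

def rowLin (X W Z D : Mat n1 n2) : ℝ :=
  ∑ i : Fin n1, ∑ j1 : Fin n2, ∑ j2 : Fin n2,
    W i j1 * W i j2 * gfun (X i j1 - X i j2) (Z i j1 - Z i j2) * (D i j1 - D i j2)

def rowQuad (X W D : Mat n1 n2) : ℝ :=
  ∑ i : Fin n1, ∑ j1 : Fin n2, ∑ j2 : Fin n2,
    W i j1 * W i j2 * (X i j1 - X i j2) ^ 2 * (D i j1 - D i j2) ^ 2 / 8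

lemma hasDerivAt_summand (M : Mat n1 n2) (i i1 i2 : Fin n1) (j j1 j2 : Fin n2) (C x1 x2 : ℝ) :
    HasDerivAt (fun t => C * pl x1 x2 (updEntry M i j t i1 j1) (updEntry M i j t i2 j2))
      ((if i1 = i ∧ j1 = j then C * gfun (x1 - x2) (M i1 j1 - M i2 j2) else 0) -
       (if i2 = i ∧ j2 = j then C * gfun (x1 - x2) (M i1 j1 - M i2 j2) else 0)) (M i j) := by
  by_cases h1 : i1 = i ∧ j1 = j <;> by_cases h2 : i2 = i ∧ j2 = j
  · obtain ⟨rfl, rfl⟩ := h1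
    obtain ⟨h2a, h2b⟩ := h2
    have hfun : (fun t => C * pl x1 x2 (updEntry M i1 j1 t i1 j1) (updEntry M i1 j1 t i2 j2))
        = fun _ => C * Real.log (1 + Real.exp 0) := by
      funext t
      simp [updEntry, h2a, h2b, pl, sub_self]
    rw [hfun]
    simp only [sub_self, and_self, ite_true, h2a, h2b]
    simpa using hasDerivAt_const (M i1 j1) (C * Real.log (1 + Real.exp 0))
  · obtain ⟨rfl, rfl⟩ := h1
    have hfun : (fun t => C * pl x1 x2 (updEntry M i1 j1 t i1 j1) (updEntry M i1 j1 t i2 j2))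
        = fun t => C * rfun (x1 - x2) (t - M i2 j2) := by
      funext t
      simp [updEntry, h2, pl_eq_rfun]
    rw [hfun]
    have hd : HasDerivAt (fun t : ℝ => rfun (x1 - x2) (t - M i2 j2))
        (gfun (x1 - x2) (M i1 j1 - M i2 j2)) (M i1 j1) := by
      have := (hasDerivAt_rfun (x1 - x2) (M i1 j1 - M i2 j2)).comp (M i1 j1)
        ((hasDerivAt_id (M i1 j1)).sub_const (M i2 j2))
      simpa [Function.comp_def] using this
    have h3 := hd.const_mul C
    simp only [h2, if_false, and_self, ite_true, sub_zero]
    simpa using h3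
  · obtain ⟨rfl, rfl⟩ := h2
    have hfun : (fun t => C * pl x1 x2 (updEntry M i2 j2 t i1 j1) (updEntry M i2 j2 t i2 j2))
        = fun t => C * rfun (x1 - x2) (M i1 j1 - t) := by
      funext t
      simp [updEntry, h1, pl_eq_rfun]
    rw [hfun]
    have hd : HasDerivAt (fun t : ℝ => rfun (x1 - x2) (M i1 j1 - t))
        (gfun (x1 - x2) (M i1 j1 - M i2 j2) * (0 - 1)) (M i2 j2) := by
      exact (hasDerivAt_rfun (x1 - x2) (M i1 j1 - M i2 j2)).comp (M i2 j2)
        ((hasDerivAt_const (M i2 j2) (M i1 j1)).sub (hasDerivAt_id (M i2 j2)))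
    have h3 := hd.const_mul C
    simp only [h1, if_false, and_self, ite_true, zero_sub]
    refine h3.congr_deriv ?_
    ring
  · have hfun : (fun t => C * pl x1 x2 (updEntry M i j t i1 j1) (updEntry M i j t i2 j2))
        = fun _ => C * pl x1 x2 (M i1 j1) (M i2 j2) := by
      funext t
      simp [updEntry, h1, h2]
    rw [hfun]
    simp only [h1, h2, if_false, sub_zero, sub_self]
    exact hasDerivAt_const _ _

lemma gradL_eq (X W M : Mat n1 n2) (i : Fin n1) (j : Fin n2) :
    gradL X W M i j =
      (1 / (n2 : ℝ)) * rowG X W M i j + (1 / (n1 : ℝ)) * rowG Xᵀ Wᵀ Mᵀ j i := by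
  have hrow : ∀ i1 : Fin n1, ∀ j1 j2 : Fin n2,
      HasDerivAt (fun t => W i1 j1 * W i1 j2 *
          pl (X i1 j1) (X i1 j2) (updEntry M i j t i1 j1) (updEntry M i j t i1 j2))
        ((if i1 = i ∧ j1 = j then
            W i1 j1 * W i1 j2 * gfun (X i1 j1 - X i1 j2) (M i1 j1 - M i1 j2) else 0) -
         (if i1 = i ∧ j2 = j then
            W i1 j1 * W i1 j2 * gfun (X i1 j1 - X i1 j2) (M i1 j1 - M i1 j2) else 0)) (M i j) :=
    fun i1 j1 j2 => hasDerivAt_summand M i i1 i1 j j1 j2 _ _ _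
  have hcol : ∀ j' : Fin n2, ∀ i1 i2 : Fin n1,
      HasDerivAt (fun t => W i1 j' * W i2 j' *
          pl (X i1 j') (X i2 j') (updEntry M i j t i1 j') (updEntry M i j t i2 j'))
        ((if i1 = i ∧ j' = j then
            W i1 j' * W i2 j' * gfun (X i1 j' - X i2 j') (M i1 j' - M i2 j') else 0) -
         (if i2 = i ∧ j' = j then
            W i1 j' * W i2 j' * gfun (X i1 j' - X i2 j') (M i1 j' - M i2 j') else 0)) (M i j) :=
    fun j' i1 i2 => hasDerivAt_summand M i i1 i2 j j' j' _ _ _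
  have H : HasDerivAt (fun t => lossL X W (updEntry M i j t))
      ((1 / (n2 : ℝ)) * (∑ i1 : Fin n1, ∑ j1 : Fin n2, ∑ j2 : Fin n2,
        ((if i1 = i ∧ j1 = j then
            W i1 j1 * W i1 j2 * gfun (X i1 j1 - X i1 j2) (M i1 j1 - M i1 j2) else 0) -
         (if i1 = i ∧ j2 = j then
            W i1 j1 * W i1 j2 * gfun (X i1 j1 - X i1 j2) (M i1 j1 - M i1 j2) else 0))) +
       (1 / (n1 : ℝ)) * (∑ j' : Fin n2, ∑ i1 : Fin n1, ∑ i2 : Fin n1,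
        ((if i1 = i ∧ j' = j then
            W i1 j' * W i2 j' * gfun (X i1 j' - X i2 j') (M i1 j' - M i2 j') else 0) -
         (if i2 = i ∧ j' = j then
            W i1 j' * W i2 j' * gfun (X i1 j' - X i2 j') (M i1 j' - M i2 j') else 0)))) (M i j) := by
    apply HasDerivAt.add
    · exact (HasDerivAt.fun_sum (fun i1 _ => HasDerivAt.fun_sum (fun j1 _ => HasDerivAt.fun_sum
        (fun j2 _ => hrow i1 j1 j2)))).const_mul _
    · exact (HasDerivAt.fun_sum (fun j' _ => HasDerivAt.fun_sum (fun i1 _ => HasDerivAt.fun_sum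
        (fun i2 _ => hcol j' i1 i2)))).const_mul _
  have hgl : gradL X W M i j = deriv (fun t => lossL X W (updEntry M i j t)) (M i j) := rfl
  have hA : (∑ i1 : Fin n1, ∑ j1 : Fin n2, ∑ j2 : Fin n2,
      ((if i1 = i ∧ j1 = j then
          W i1 j1 * W i1 j2 * gfun (X i1 j1 - X i1 j2) (M i1 j1 - M i1 j2) else 0) -
       (if i1 = i ∧ j2 = j then
          W i1 j1 * W i1 j2 * gfun (X i1 j1 - X i1 j2) (M i1 j1 - M i1 j2) else 0)))
      = rowG X W M i j := by
    rw [rowG]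
    simp only [Finset.sum_sub_distrib]
    congr 1
    · simp [ite_and, Finset.sum_ite_irrel, Finset.sum_ite_eq', Finset.sum_ite_eq]
    · simp [ite_and, Finset.sum_ite_irrel, Finset.sum_ite_eq', Finset.sum_ite_eq]
  have hB : (∑ j' : Fin n2, ∑ i1 : Fin n1, ∑ i2 : Fin n1,
      ((if i1 = i ∧ j' = j then
          W i1 j' * W i2 j' * gfun (X i1 j' - X i2 j') (M i1 j' - M i2 j') else 0) -
       (if i2 = i ∧ j' = j then
          W i1 j' * W i2 j' * gfun (X i1 j' - X i2 j') (M i1 j' - M i2 j') else 0)))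
      = rowG Xᵀ Wᵀ Mᵀ j i := by
    rw [rowG]
    simp only [Finset.sum_sub_distrib, Matrix.transpose_apply]
    congr 1
    · simp [ite_and, Finset.sum_ite_irrel, Finset.sum_ite_eq', Finset.sum_ite_eq]
    · simp [ite_and, Finset.sum_ite_irrel, Finset.sum_ite_eq', Finset.sum_ite_eq]
  rw [hgl, H.deriv, hA, hB]

lemma rowG_lin (X W Z D : Mat n1 n2) :
    (∑ i, ∑ j, rowG X W Z i j * D i j) = rowLin X W Z D := by
  rw [rowLin]
  have h1 : ∀ i : Fin n1, ∀ j1 j2 : Fin n2,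
      W i j1 * W i j2 * gfun (X i j1 - X i j2) (Z i j1 - Z i j2) * (D i j1 - D i j2)
      = W i j1 * W i j2 * gfun (X i j1 - X i j2) (Z i j1 - Z i j2) * D i j1
        - W i j1 * W i j2 * gfun (X i j1 - X i j2) (Z i j1 - Z i j2) * D i j2 := by
    intro i j1 j2; ring
  simp only [h1, Finset.sum_sub_distrib]
  simp only [rowG, sub_mul, Finset.sum_sub_distrib, Finset.sum_mul]
  congr 1
  refine Finset.sum_congr rfl fun i _ => ?_
  exact Finset.sum_comm

lemma rowTaylor (X W Z Y : Mat n1 n2) (hW : ∀ i j, 0 ≤ W i j) :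
    rowLf X W Y ≤ rowLf X W Z + rowLin X W Z (Y - Z) + rowQuad X W (Y - Z) := by
  have key : ∀ i : Fin n1, ∀ j1 j2 : Fin n2,
      W i j1 * W i j2 * pl (X i j1) (X i j2) (Y i j1) (Y i j2)
      ≤ W i j1 * W i j2 * pl (X i j1) (X i j2) (Z i j1) (Z i j2)
        + W i j1 * W i j2 * gfun (X i j1 - X i j2) (Z i j1 - Z i j2) *
            ((Y - Z) i j1 - (Y - Z) i j2)
        + W i j1 * W i j2 * (X i j1 - X i j2) ^ 2 * ((Y - Z) i j1 - (Y - Z) i j2) ^ 2 / 8 := by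
    intro i j1 j2
    have hWn : 0 ≤ W i j1 * W i j2 := mul_nonneg (hW _ _) (hW _ _)
    have ht := rfun_taylor (X i j1 - X i j2) (Z i j1 - Z i j2) (Y i j1 - Y i j2)
    have hb : Y i j1 - Y i j2 - (Z i j1 - Z i j2) = (Y - Z) i j1 - (Y - Z) i j2 := by
      simp [Matrix.sub_apply]; ring
    rw [hb] at ht
    have h2 := mul_le_mul_of_nonneg_left ht hWn
    simp only [pl_eq_rfun]
    nlinarith [h2]
  have step1 : rowLf X W Y ≤ ∑ i : Fin n1, ∑ j1 : Fin n2, ∑ j2 : Fin n2,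
      (W i j1 * W i j2 * pl (X i j1) (X i j2) (Z i j1) (Z i j2)
      + W i j1 * W i j2 * gfun (X i j1 - X i j2) (Z i j1 - Z i j2) *
          ((Y - Z) i j1 - (Y - Z) i j2)
      + W i j1 * W i j2 * (X i j1 - X i j2) ^ 2 * ((Y - Z) i j1 - (Y - Z) i j2) ^ 2 / 8) := by
    rw [rowLf]
    exact Finset.sum_le_sum fun i _ => Finset.sum_le_sum fun j1 _ =>
      Finset.sum_le_sum fun j2 _ => key i j1 j2
  have step2 : (∑ i : Fin n1, ∑ j1 : Fin n2, ∑ j2 : Fin n2,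
      (W i j1 * W i j2 * pl (X i j1) (X i j2) (Z i j1) (Z i j2)
      + W i j1 * W i j2 * gfun (X i j1 - X i j2) (Z i j1 - Z i j2) *
          ((Y - Z) i j1 - (Y - Z) i j2)
      + W i j1 * W i j2 * (X i j1 - X i j2) ^ 2 * ((Y - Z) i j1 - (Y - Z) i j2) ^ 2 / 8))
      = rowLf X W Z + rowLin X W Z (Y - Z) + rowQuad X W (Y - Z) := by
    simp only [rowLf, rowLin, rowQuad, Finset.sum_add_distrib]
  linarith [step1, step2]

lemma rowQuad_bound (X W D : Mat n1 n2) (hW01 : ∀ i j, W i j = 0 ∨ W i j = 1)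
    (B R : ℝ) (hB : 0 ≤ B) (hR : 0 ≤ R)
    (hLx : ∀ i j1 j2, W i j1 = 1 → W i j2 = 1 → (X i j1 - X i j2) ^ 2 ≤ B)
    (hRow : ∀ i, (∑ j, W i j) ≤ R) :
    rowQuad X W D ≤ B * R / 4 * (∑ i, ∑ j, D i j ^ 2) := by
  have h3 : ∀ i, (∑ j1, ∑ j2, W i j1 * W i j2 * (D i j1 - D i j2) ^ 2)
      ≤ 2 * R * (∑ j, D i j ^ 2) := by
    intro i
    have hid : (∑ j1, ∑ j2, W i j1 * W i j2 * (D i j1 - D i j2) ^ 2)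
        = 2 * (∑ j, W i j) * (∑ j, W i j * D i j ^ 2) - 2 * (∑ j, W i j * D i j) ^ 2 := by
      have e1 : ∀ j1 j2 : Fin n2, W i j1 * W i j2 * (D i j1 - D i j2) ^ 2
          = W i j1 * D i j1 ^ 2 * W i j2 + W i j1 * (W i j2 * D i j2 ^ 2)
            - (W i j1 * D i j1) * (W i j2 * D i j2)
            - (W i j1 * D i j1) * (W i j2 * D i j2) := by
        intro j1 j2; ring
      simp only [e1, Finset.sum_sub_distrib, Finset.sum_add_distrib,
        ← Finset.sum_mul_sum]
      ring
    rw [hid]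
    have hWd2 : (∑ j, W i j * D i j ^ 2) ≤ ∑ j, D i j ^ 2 := by
      refine Finset.sum_le_sum fun j _ => ?_
      rcases hW01 i j with h | h <;> simp [h, sq_nonneg]
    have hWd2n : 0 ≤ (∑ j, W i j * D i j ^ 2) := by
      refine Finset.sum_nonneg fun j _ => ?_
      rcases hW01 i j with h | h <;> simp [h, sq_nonneg]
    nlinarith [sq_nonneg (∑ j, W i j * D i j), hRow i, hWd2, hWd2n,
      mul_le_mul_of_nonneg_right (hRow i) hWd2n]
  have h1 : rowQuad X W D ≤ ∑ i : Fin n1, ∑ j1 : Fin n2, ∑ j2 : Fin n2,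
      B * (W i j1 * W i j2 * (D i j1 - D i j2) ^ 2) / 8 := by
    rw [rowQuad]
    refine Finset.sum_le_sum fun i _ => Finset.sum_le_sum fun j1 _ =>
      Finset.sum_le_sum fun j2 _ => ?_
    rcases hW01 i j1 with h | h
    · simp [h]
    rcases hW01 i j2 with h' | h'
    · simp [h, h']
    have := hLx i j1 j2 h h'
    rw [h, h']
    nlinarith [sq_nonneg (D i j1 - D i j2)]
  have h2 : (∑ i : Fin n1, ∑ j1 : Fin n2, ∑ j2 : Fin n2,
      B * (W i j1 * W i j2 * (D i j1 - D i j2) ^ 2) / 8)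
      = (B / 8) * ∑ i : Fin n1, ∑ j1 : Fin n2, ∑ j2 : Fin n2,
          W i j1 * W i j2 * (D i j1 - D i j2) ^ 2 := by
    simp only [Finset.mul_sum]
    exact Finset.sum_congr rfl fun i _ => Finset.sum_congr rfl fun j1 _ =>
      Finset.sum_congr rfl fun j2 _ => by ring
  have h6 : (B / 8) * (∑ i : Fin n1, ∑ j1 : Fin n2, ∑ j2 : Fin n2,
        W i j1 * W i j2 * (D i j1 - D i j2) ^ 2)
      ≤ (B / 8) * (2 * R * (∑ i, ∑ j, D i j ^ 2)) := by
    refine mul_le_mul_of_nonneg_left ?_ (by positivity)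
    have h4 : (∑ i : Fin n1, ∑ j1 : Fin n2, ∑ j2 : Fin n2,
        W i j1 * W i j2 * (D i j1 - D i j2) ^ 2) ≤ ∑ i : Fin n1, 2 * R * (∑ j, D i j ^ 2) :=
      Finset.sum_le_sum fun i _ => h3 i
    have h5 : (∑ i : Fin n1, 2 * R * (∑ j, D i j ^ 2)) = 2 * R * (∑ i, ∑ j, D i j ^ 2) := by
      rw [← Finset.mul_sum]
    linarith [h4, h5]
  have e : B * R / 4 * (∑ i, ∑ j, D i j ^ 2)
      = (B / 8) * (2 * R * (∑ i, ∑ j, D i j ^ 2)) := by ring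
  rw [e]
  linarith [h1, h2, h6]

lemma Lx_nonneg (X W : Mat n1 n2) : 0 ≤ Lx X W := sq_nonneg _

lemma Lx_bound (X W : Mat n1 n2) :
    ∀ (i i' : Fin n1) (j j' : Fin n2), W i j = 1 → W i' j' = 1 →
      (X i j - X i' j') ^ 2 ≤ Lx X W := by
  intro i i' j j' h h'
  have hfin : {x : ℝ | ∃ p : Fin n1 × Fin n2, W p.1 p.2 = 1 ∧ x = X p.1 p.2}.Finite := by
    apply Set.Finite.subset (Set.finite_range (fun p : Fin n1 × Fin n2 => X p.1 p.2))
    rintro x ⟨p, _, rfl⟩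
    exact ⟨p, rfl⟩
  have hm1 : X i j ∈ {x : ℝ | ∃ p : Fin n1 × Fin n2, W p.1 p.2 = 1 ∧ x = X p.1 p.2} :=
    ⟨(i, j), h, rfl⟩
  have hm2 : X i' j' ∈ {x : ℝ | ∃ p : Fin n1 × Fin n2, W p.1 p.2 = 1 ∧ x = X p.1 p.2} :=
    ⟨(i', j'), h', rfl⟩
  have hub1 := le_csSup hfin.bddAbove hm1
  have hub2 := le_csSup hfin.bddAbove hm2
  have hlb1 := csInf_le hfin.bddBelow hm1
  have hlb2 := csInf_le hfin.bddBelow hm2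
  rw [Lx]
  apply sq_le_sq'
  · linarith
  · linarith

lemma descent (hn1 : 0 < n1) (hn2 : 0 < n2) (X W : Mat n1 n2)
    (hW01 : ∀ i j, W i j = 0 ∨ W i j = 1) (Z Y : Mat n1 n2) :
    lossL X W Y ≤ lossL X W Z + (∑ i, ∑ j, gradL X W Z i j * (Y i j - Z i j))
      + Lf X W / 2 * (∑ i, ∑ j, (Y i j - Z i j) ^ 2) := by
  have hW : ∀ i j, 0 ≤ W i j := fun i j => by rcases hW01 i j with h | h <;> simp [h]
  set R := sSup (Set.range fun i : Fin n1 => ∑ j, W i j) with hRdef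
  set C := sSup (Set.range fun j : Fin n2 => ∑ i, W i j) with hCdef
  have hRow : ∀ i, (∑ j, W i j) ≤ R := fun i =>
    le_csSup ((Set.finite_range _).bddAbove) ⟨i, rfl⟩
  have hCol : ∀ j, (∑ i, W i j) ≤ C := fun j =>
    le_csSup ((Set.finite_range _).bddAbove) ⟨j, rfl⟩
  have hR0 : 0 ≤ R := le_trans (Finset.sum_nonneg fun j _ => hW ⟨0, hn1⟩ j) (hRow ⟨0, hn1⟩)
  have hC0 : 0 ≤ C := le_trans (Finset.sum_nonneg fun i _ => hW i ⟨0, hn2⟩) (hCol ⟨0, hn2⟩)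
  set D : Mat n1 n2 := Y - Z with hD
  have h1n1 : (0:ℝ) ≤ 1 / (n1:ℝ) := by positivity
  have h1n2 : (0:ℝ) ≤ 1 / (n2:ℝ) := by positivity
  have ht1 := rowTaylor X W Z Y hW
  have ht2 := rowTaylor Xᵀ Wᵀ Zᵀ Yᵀ (fun j i => hW i j)
  have htrans : Yᵀ - Zᵀ = Dᵀ := by rw [hD, Matrix.transpose_sub]
  rw [htrans] at ht2
  have hq1 := rowQuad_bound X W D hW01 (Lx X W) R (Lx_nonneg X W) hR0
      (fun i j1 j2 h h' => Lx_bound X W i i j1 j2 h h') hRow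
  have hq2 := rowQuad_bound Xᵀ Wᵀ Dᵀ (fun j i => hW01 i j) (Lx X W) C (Lx_nonneg X W) hC0
      (fun j i1 i2 h h' => Lx_bound X W i1 i2 j j h h') hCol
  have hgr : (∑ i, ∑ j, gradL X W Z i j * (Y i j - Z i j))
      = (1 / (n2:ℝ)) * rowLin X W Z D + (1 / (n1:ℝ)) * rowLin Xᵀ Wᵀ Zᵀ Dᵀ := by
    rw [← rowG_lin X W Z D, ← rowG_lin Xᵀ Wᵀ Zᵀ Dᵀ]
    have e1 : ∀ i j, gradL X W Z i j * (Y i j - Z i j)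
        = (1 / (n2:ℝ)) * (rowG X W Z i j * D i j)
          + (1 / (n1:ℝ)) * (rowG Xᵀ Wᵀ Zᵀ j i * Dᵀ j i) := by
      intro i j
      rw [gradL_eq]
      simp only [hD, Matrix.sub_apply, Matrix.transpose_apply]
      ring
    simp only [e1, Finset.sum_add_distrib, ← Finset.mul_sum]
    congr 1
    congr 1
    exact Finset.sum_comm
  have hDS : (∑ i, ∑ j, D i j ^ 2) = ∑ i, ∑ j, (Y i j - Z i j) ^ 2 := by
    simp [hD, Matrix.sub_apply]
  have hDT : (∑ j, ∑ i, (Dᵀ) j i ^ 2) = ∑ i, ∑ j, (Y i j - Z i j) ^ 2 := by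
    rw [Finset.sum_comm]
    simp [hD, Matrix.sub_apply, Matrix.transpose_apply]
  rw [hDS] at hq1
  rw [hDT] at hq2
  have hLw : Lw W = C / (n1:ℝ) + R / (n2:ℝ) := by
    rw [Lw, ← hRdef, ← hCdef]
  have main : lossL X W Y ≤ (1 / (n2:ℝ)) * (rowLf X W Z + rowLin X W Z D + rowQuad X W D)
      + (1 / (n1:ℝ)) * (rowLf Xᵀ Wᵀ Zᵀ + rowLin Xᵀ Wᵀ Zᵀ Dᵀ + rowQuad Xᵀ Wᵀ Dᵀ) := by
    rw [lossL_eq_rows]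
    exact add_le_add (mul_le_mul_of_nonneg_left ht1 h1n2) (mul_le_mul_of_nonneg_left ht2 h1n1)
  have hquad : (1 / (n2:ℝ)) * rowQuad X W D + (1 / (n1:ℝ)) * rowQuad Xᵀ Wᵀ Dᵀ
      ≤ Lf X W / 2 * (∑ i, ∑ j, (Y i j - Z i j) ^ 2) := by
    have hb1 := mul_le_mul_of_nonneg_left hq1 h1n2
    have hb2 := mul_le_mul_of_nonneg_left hq2 h1n1
    have heq : (1 / (n2:ℝ)) * (Lx X W * R / 4 * (∑ i, ∑ j, (Y i j - Z i j) ^ 2))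
        + (1 / (n1:ℝ)) * (Lx X W * C / 4 * (∑ i, ∑ j, (Y i j - Z i j) ^ 2))
        = Lf X W / 2 * (∑ i, ∑ j, (Y i j - Z i j) ^ 2) := by
      rw [Lf, hLw]
      ring
    linarith
  rw [lossL_eq_rows X W Z, hgr]
  have hexpand : (1 / (n2:ℝ)) * (rowLf X W Z + rowLin X W Z D + rowQuad X W D)
      + (1 / (n1:ℝ)) * (rowLf Xᵀ Wᵀ Zᵀ + rowLin Xᵀ Wᵀ Zᵀ Dᵀ + rowQuad Xᵀ Wᵀ Dᵀ)
      = ((1 / (n2:ℝ)) * rowLf X W Z + (1 / (n1:ℝ)) * rowLf Xᵀ Wᵀ Zᵀ)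
        + ((1 / (n2:ℝ)) * rowLin X W Z D + (1 / (n1:ℝ)) * rowLin Xᵀ Wᵀ Zᵀ Dᵀ)
        + ((1 / (n2:ℝ)) * rowQuad X W D + (1 / (n1:ℝ)) * rowQuad Xᵀ Wᵀ Dᵀ) := by ring
  rw [hexpand] at main
  linarith

lemma Lf_nonneg (hn1 : 0 < n1) (hn2 : 0 < n2) (X W : Mat n1 n2)
    (hW01 : ∀ i j, W i j = 0 ∨ W i j = 1) : 0 ≤ Lf X W := by
  have hW : ∀ i j, 0 ≤ W i j := fun i j => by rcases hW01 i j with h | h <;> simp [h]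
  have hRow : (∑ j, W ⟨0, hn1⟩ j) ≤ sSup (Set.range fun i : Fin n1 => ∑ j, W i j) :=
    le_csSup ((Set.finite_range _).bddAbove) ⟨⟨0, hn1⟩, rfl⟩
  have hCol : (∑ i, W i ⟨0, hn2⟩) ≤ sSup (Set.range fun j : Fin n2 => ∑ i, W i j) :=
    le_csSup ((Set.finite_range _).bddAbove) ⟨⟨0, hn2⟩, rfl⟩
  have h1 : 0 ≤ sSup (Set.range fun i : Fin n1 => ∑ j, W i j) :=
    le_trans (Finset.sum_nonneg fun j _ => hW _ j) hRow
  have h2 : 0 ≤ sSup (Set.range fun j : Fin n2 => ∑ i, W i j) :=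
    le_trans (Finset.sum_nonneg fun i _ => hW i _) hCol
  have hLw : 0 ≤ Lw W := by
    rw [Lw]
    exact add_nonneg (div_nonneg h2 (Nat.cast_nonneg n1)) (div_nonneg h1 (Nat.cast_nonneg n2))
  rw [Lf]
  exact div_nonneg (mul_nonneg (Lx_nonneg X W) hLw) (by norm_num)

theorem statement0 (n1 n2 : ℕ) (hn1 : 0 < n1) (hn2 : 0 < n2)
    (al lam : ℝ) (hal : 0 < al) (hlam : 0 < lam)
    (X W : Mat n1 n2) (hW01 : ∀ i j, W i j = 0 ∨ W i j = 1)
    (hWnz : ∃ i j, W i j = 1)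
    (mu : ℝ) (hmu : Lf X W < mu)
    (M : ℕ → Mat n1 n2) (hM0 : infNorm (M 0) ≤ al)
    (hiter : ∀ k : ℕ, IsProx (lam / mu) al (M k - mu⁻¹ • gradL X W (M k)) (M (k + 1)))
    (F : ℕ → ℝ) (hF : ∀ k, F k = objF X W lam (M k)) :
    ∀ k : ℕ, (mu - Lf X W) / 2 * frobNorm (M k - M (k + 1)) ^ 2 ≤ F k - F (k + 1) := by
  have hfeas : ∀ k, infNorm (M k) ≤ al := by
    intro k
    induction k with
    | zero => exact hM0
    | succ n ih => exact (hiter n).1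
  intro k
  have hmu0 : 0 < mu := lt_of_le_of_lt (Lf_nonneg hn1 hn2 X W hW01) hmu
  have hne : mu ≠ 0 := ne_of_gt hmu0
  have hfr : ∀ U : Mat n1 n2, frobNorm U ^ 2 = ∑ i, ∑ j, U i j ^ 2 := fun U =>
    Real.sq_sqrt (Finset.sum_nonneg fun i _ => Finset.sum_nonneg fun j _ => sq_nonneg _)
  have hpx := (hiter k).2 (M k) (hfeas k)
  have hexp1 : frobNorm (M (k+1) - (M k - mu⁻¹ • gradL X W (M k))) ^ 2
      = (∑ i, ∑ j, (M (k+1) i j - M k i j) ^ 2)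
        + 2 * mu⁻¹ * (∑ i, ∑ j, gradL X W (M k) i j * (M (k+1) i j - M k i j))
        + mu⁻¹ ^ 2 * (∑ i, ∑ j, gradL X W (M k) i j ^ 2) := by
    rw [hfr]
    have e : ∀ i j, (M (k+1) - (M k - mu⁻¹ • gradL X W (M k))) i j
        = (M (k+1) i j - M k i j) + mu⁻¹ * gradL X W (M k) i j := by
      intro i j
      simp [Matrix.sub_apply, Matrix.smul_apply, smul_eq_mul]
      ring
    have e2 : (∑ i, ∑ j, ((M (k+1) - (M k - mu⁻¹ • gradL X W (M k))) i j) ^ 2)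
        = ∑ i, ∑ j, ((M (k+1) i j - M k i j) ^ 2
            + 2 * mu⁻¹ * (gradL X W (M k) i j * (M (k+1) i j - M k i j))
            + mu⁻¹ ^ 2 * gradL X W (M k) i j ^ 2) := by
      refine Finset.sum_congr rfl fun i _ => Finset.sum_congr rfl fun j _ => ?_
      rw [e]; ring
    rw [e2]
    simp only [Finset.sum_add_distrib, ← Finset.mul_sum]
  have hexp0 : frobNorm (M k - (M k - mu⁻¹ • gradL X W (M k))) ^ 2
      = mu⁻¹ ^ 2 * (∑ i, ∑ j, gradL X W (M k) i j ^ 2) := by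
    rw [hfr]
    have e2 : (∑ i, ∑ j, ((M k - (M k - mu⁻¹ • gradL X W (M k))) i j) ^ 2)
        = ∑ i, ∑ j, mu⁻¹ ^ 2 * gradL X W (M k) i j ^ 2 := by
      refine Finset.sum_congr rfl fun i _ => Finset.sum_congr rfl fun j _ => ?_
      simp [Matrix.sub_apply, Matrix.smul_apply, smul_eq_mul]
      ring
    rw [e2]
    simp only [← Finset.mul_sum]
  rw [proxObj, proxObj, hexp1, hexp0] at hpx
  simp only [div_eq_mul_inv] at hpx
  have hstep : 1 / 2 * (∑ i, ∑ j, (M (k+1) i j - M k i j) ^ 2)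
      + mu⁻¹ * (∑ i, ∑ j, gradL X W (M k) i j * (M (k+1) i j - M k i j))
      + lam * mu⁻¹ * (nuclNorm (M (k+1)) - nuclNorm (M k)) ≤ 0 := by
    linarith
  have key : mu / 2 * (∑ i, ∑ j, (M (k+1) i j - M k i j) ^ 2)
      + (∑ i, ∑ j, gradL X W (M k) i j * (M (k+1) i j - M k i j))
      + lam * (nuclNorm (M (k+1)) - nuclNorm (M k)) ≤ 0 := by
    have e1 : mu / 2 * (∑ i, ∑ j, (M (k+1) i j - M k i j) ^ 2)
        + (∑ i, ∑ j, gradL X W (M k) i j * (M (k+1) i j - M k i j))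
        + lam * (nuclNorm (M (k+1)) - nuclNorm (M k))
        = mu * (1 / 2 * (∑ i, ∑ j, (M (k+1) i j - M k i j) ^ 2)
          + mu⁻¹ * (∑ i, ∑ j, gradL X W (M k) i j * (M (k+1) i j - M k i j))
          + lam * mu⁻¹ * (nuclNorm (M (k+1)) - nuclNorm (M k))) := by
      field_simp
    rw [e1]
    have h2 := mul_le_mul_of_nonneg_left hstep hmu0.le
    simpa using h2
  have hdes := descent hn1 hn2 X W hW01 (M k) (M (k+1))
  have hfro : frobNorm (M k - M (k+1)) ^ 2 = ∑ i, ∑ j, (M (k+1) i j - M k i j) ^ 2 := by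
    rw [hfr]
    refine Finset.sum_congr rfl fun i _ => Finset.sum_congr rfl fun j _ => ?_
    simp only [Matrix.sub_apply]
    ring
  rw [hF k, hF (k+1), objF, objF, hfro]
  linarith

end NMC
end
end

section
/- Existence and uniqueness of the nuclear-norm-minimizing shift: for every matrix M ∈ ℝ^{n1×n2}, the function c ↦ ‖M ⊕ c‖_* from ℝ to ℝ is convex and attains its minimum at a unique point ĉ ∈ ℝ; consequently the transformation T(M) = M ⊕ ĉ is well defined. -/
open scoped BigOperators Classical
open MeasureTheory ProbabilityTheory Matrix

noncomputable section

namespace NMC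

variable {n1 n2 : ℕ}

namespace NMCAux

variable {N1 N2 m : ℕ}

/-- pseudo-orthonormal family: pairwise orthogonal, each vector of norm 1 or zero. -/
def ONF {m n : ℕ} (x : Fin m → Fin n → ℝ) : Prop :=
  (∀ k k' : Fin m, k ≠ k' → x k ⬝ᵥ x k' = 0) ∧ (∀ k, x k ⬝ᵥ x k = 1 ∨ x k = 0)

lemma dot_self_nonneg {n : ℕ} (v : Fin n → ℝ) : 0 ≤ v ⬝ᵥ v :=
  Finset.sum_nonneg fun i _ => mul_self_nonneg _

lemma bessel_core {n : ℕ} {x : Fin m → Fin n → ℝ} (hx : ONF x) (u : Fin n → ℝ) :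
    (fun i => u i - ∑ k, (x k ⬝ᵥ u) * x k i) ⬝ᵥ (fun i => u i - ∑ k, (x k ⬝ᵥ u) * x k i)
      = u ⬝ᵥ u - ∑ k, (x k ⬝ᵥ u) ^ 2 := by
  set c : Fin m → ℝ := fun k => x k ⬝ᵥ u with hc
  have hcs : ∀ k, x k = 0 → c k = 0 := by
    intro k hk; simp [hc, hk, dotProduct]
  have hA : ∀ k, (∑ i, u i * (c k * x k i)) = c k * c k := by
    intro k
    have : (∑ i, u i * (c k * x k i)) = c k * ∑ i, x k i * u i := by
      rw [Finset.mul_sum]; apply Finset.sum_congr rfl; intro i _; ring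
    rw [this]
    have : ∑ i, x k i * u i = c k := rfl
    rw [this]
  have hB : (∑ i, (∑ k, c k * x k i) * (∑ k, c k * x k i)) = ∑ k, c k * c k := by
    have e1 : ∀ i, (∑ k, c k * x k i) * (∑ k, c k * x k i)
        = ∑ k, ∑ k', (c k * c k') * (x k i * x k' i) := by
      intro i
      rw [Finset.sum_mul_sum]
      apply Finset.sum_congr rfl; intro k _
      apply Finset.sum_congr rfl; intro k' _; ring
    simp_rw [e1]
    rw [Finset.sum_comm]
    apply Finset.sum_congr rfl
    intro k _
    rw [Finset.sum_comm]
    have e2 : ∀ k', (∑ i, (c k * c k') * (x k i * x k' i)) = (c k * c k') * (x k ⬝ᵥ x k') := by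
      intro k'; simp [dotProduct, Finset.mul_sum]
    simp_rw [e2]
    rw [Finset.sum_eq_single k]
    · rcases hx.2 k with h1 | h1
      · rw [h1]; ring
      · rw [hcs k h1]; ring
    · intro k' _ hk'
      rw [hx.1 k k' (Ne.symm hk')]; ring
    · intro h; exact absurd (Finset.mem_univ k) h
  have dot_eq : ∀ {n : ℕ} (v w : Fin n → ℝ), v ⬝ᵥ w = ∑ i, v i * w i := fun v w => rfl
  rw [dot_eq, dot_eq]
  have expand : ∀ i, (u i - ∑ k, c k * x k i) * (u i - ∑ k, c k * x k i)
      = u i * u i - 2 * (u i * ∑ k, c k * x k i)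
        + (∑ k, c k * x k i) * (∑ k, c k * x k i) := by intro i; ring
  change ∑ i, (u i - ∑ k, c k * x k i) * (u i - ∑ k, c k * x k i) = ∑ i, u i * u i - ∑ k, c k ^ 2
  simp_rw [expand]
  rw [Finset.sum_add_distrib, Finset.sum_sub_distrib, hB]
  have : (∑ i, 2 * (u i * ∑ k, c k * x k i)) = 2 * ∑ k, c k * c k := by
    rw [← Finset.mul_sum]
    congr 1
    have : ∀ i, u i * ∑ k, c k * x k i = ∑ k, u i * (c k * x k i) := by
      intro i; rw [Finset.mul_sum]
    simp_rw [this]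
    rw [Finset.sum_comm]
    exact Finset.sum_congr rfl fun k _ => hA k
  rw [this]
  have : (∑ k, c k ^ 2) = ∑ k, c k * c k := by
    apply Finset.sum_congr rfl; intro k _; ring
  rw [this]; ring

lemma bessel_le {n : ℕ} {x : Fin m → Fin n → ℝ} (hx : ONF x) (u : Fin n → ℝ) :
    ∑ k, (x k ⬝ᵥ u) ^ 2 ≤ u ⬝ᵥ u := by
  have h := bessel_core hx u
  have h2 := dot_self_nonneg (fun i => u i - ∑ k, (x k ⬝ᵥ u) * x k i)
  linarith [h ▸ h2]

lemma bessel_eq {n : ℕ} {x : Fin m → Fin n → ℝ} (hx : ONF x) (u : Fin n → ℝ)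
    (h : ∑ k, (x k ⬝ᵥ u) ^ 2 = u ⬝ᵥ u) :
    ∀ i, u i = ∑ k, (x k ⬝ᵥ u) * x k i := by
  have hcore := bessel_core hx u
  rw [← h, sub_self] at hcore
  have := dotProduct_self_eq_zero.mp hcore
  intro i
  have := congrFun this i
  simpa [sub_eq_zero] using this


section Spectral

def ev (A : Matrix (Fin N1) (Fin N2) ℝ) : Fin N2 → ℝ :=
  (Matrix.isHermitian_conjTranspose_mul_self A).eigenvalues

def evec (A : Matrix (Fin N1) (Fin N2) ℝ) : Fin N2 → Fin N2 → ℝ :=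
  fun k i => ((Matrix.IsHermitian.eigenvectorUnitary
    (Matrix.isHermitian_conjTranspose_mul_self A) : Matrix (Fin N2) (Fin N2) ℝ)) i k

/-- local nuclear norm -/
def nucl (A : Matrix (Fin N1) (Fin N2) ℝ) : ℝ := ∑ k, Real.sqrt (ev A k)

lemma ev_nonneg (A : Matrix (Fin N1) (Fin N2) ℝ) (k : Fin N2) : 0 ≤ ev A k :=
  Matrix.eigenvalues_conjTranspose_mul_self_nonneg A k

lemma nucl_nonneg (A : Matrix (Fin N1) (Fin N2) ℝ) : 0 ≤ nucl A :=
  Finset.sum_nonneg fun k _ => Real.sqrt_nonneg _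

lemma evec_eq_basis (A : Matrix (Fin N1) (Fin N2) ℝ) (k : Fin N2) :
    evec A k = ⇑((Matrix.isHermitian_conjTranspose_mul_self A).eigenvectorBasis k) := rfl

lemma evec_mulVec (A : Matrix (Fin N1) (Fin N2) ℝ) (k : Fin N2) :
    (Aᴴ * A) *ᵥ evec A k = ev A k • evec A k := by
  rw [evec_eq_basis]
  exact (Matrix.isHermitian_conjTranspose_mul_self A).mulVec_eigenvectorBasis k

lemma evec_dot (A : Matrix (Fin N1) (Fin N2) ℝ) (k k' : Fin N2) :
    evec A k ⬝ᵥ evec A k' = if k = k' then 1 else 0 := by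
  set U : Matrix (Fin N2) (Fin N2) ℝ :=
    (Matrix.IsHermitian.eigenvectorUnitary (Matrix.isHermitian_conjTranspose_mul_self A) :
      Matrix (Fin N2) (Fin N2) ℝ) with hU
  have hmem := (Matrix.IsHermitian.eigenvectorUnitary
    (Matrix.isHermitian_conjTranspose_mul_self A)).prop
  have h1 : star U * U = 1 := Matrix.mem_unitaryGroup_iff'.mp hmem
  have := congrFun (congrFun (congrArg (fun M => (M : Matrix (Fin N2) (Fin N2) ℝ)) h1) k) k'
  simp only [Matrix.mul_apply, Matrix.star_eq_conjTranspose, Matrix.conjTranspose_apply,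
    star_trivial, Matrix.one_apply] at this
  simpa [dotProduct, evec, hU] using this

lemma evec_row (A : Matrix (Fin N1) (Fin N2) ℝ) (j j' : Fin N2) :
    ∑ k, evec A k j * evec A k j' = if j = j' then 1 else 0 := by
  set U : Matrix (Fin N2) (Fin N2) ℝ :=
    (Matrix.IsHermitian.eigenvectorUnitary (Matrix.isHermitian_conjTranspose_mul_self A) :
      Matrix (Fin N2) (Fin N2) ℝ) with hU
  have hmem := (Matrix.IsHermitian.eigenvectorUnitary
    (Matrix.isHermitian_conjTranspose_mul_self A)).prop
  have h1 : U * star U = 1 := Matrix.mem_unitaryGroup_iff.mp hmem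
  have := congrFun (congrFun (congrArg (fun M => (M : Matrix (Fin N2) (Fin N2) ℝ)) h1) j) j'
  simp only [Matrix.mul_apply, Matrix.star_eq_conjTranspose, Matrix.conjTranspose_apply,
    star_trivial, Matrix.one_apply] at this
  simpa [evec, hU] using this

lemma dot_conjT (A : Matrix (Fin N1) (Fin N2) ℝ) (v : Fin N2 → ℝ) (u : Fin N1 → ℝ) :
    v ⬝ᵥ (Aᴴ *ᵥ u) = (A *ᵥ v) ⬝ᵥ u := by
  simp only [dotProduct, Matrix.mulVec, dotProduct,
    Matrix.conjTranspose_apply, star_trivial, Finset.mul_sum, Finset.sum_mul]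
  rw [Finset.sum_comm]
  apply Finset.sum_congr rfl; intro i _
  apply Finset.sum_congr rfl; intro j _
  ring

lemma Av_dot_Av (A : Matrix (Fin N1) (Fin N2) ℝ) (k k' : Fin N2) :
    (A *ᵥ evec A k) ⬝ᵥ (A *ᵥ evec A k') = if k = k' then ev A k else 0 := by
  have h1 : (A *ᵥ evec A k) ⬝ᵥ (A *ᵥ evec A k') = evec A k ⬝ᵥ ((Aᴴ * A) *ᵥ evec A k') := by
    rw [← Matrix.mulVec_mulVec, dot_conjT]
  rw [h1, evec_mulVec, dotProduct_smul, evec_dot]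
  by_cases h : k = k'
  · subst h; simp
  · simp [h]

lemma matrix_repr (A : Matrix (Fin N1) (Fin N2) ℝ) (i : Fin N1) (j : Fin N2) :
    A i j = ∑ k, (A *ᵥ evec A k) i * evec A k j := by
  have h1 : ∀ k, (A *ᵥ evec A k) i = ∑ j', A i j' * evec A k j' := fun k => rfl
  simp_rw [h1, Finset.sum_mul]
  rw [Finset.sum_comm]
  have h2 : ∀ j', (∑ k, A i j' * evec A k j' * evec A k j)
      = A i j' * (if j' = j then 1 else 0) := by
    intro j'
    rw [← evec_row A j' j, Finset.mul_sum]
    apply Finset.sum_congr rfl; intro k _; ring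
  simp_rw [h2]
  simp

end Spectral


section Key

lemma dot_mulVec_expand {m : ℕ} (B : Matrix (Fin N1) (Fin N2) ℝ)
    (p : Fin m → Fin N1 → ℝ) (w : Fin m → Fin N2 → ℝ)
    (hB : ∀ i j, B i j = ∑ l, p l i * w l j) (u : Fin N1 → ℝ) (v : Fin N2 → ℝ) :
    u ⬝ᵥ (B *ᵥ v) = ∑ l, (u ⬝ᵥ p l) * (w l ⬝ᵥ v) := by
  calc u ⬝ᵥ (B *ᵥ v) = ∑ i, ∑ j, u i * (B i j * v j) := by
        simp only [dotProduct, Matrix.mulVec, Finset.mul_sum]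
    _ = ∑ i, ∑ j, ∑ l, u i * (p l i * w l j * v j) := by
        apply Finset.sum_congr rfl; intro i _
        apply Finset.sum_congr rfl; intro j _
        rw [hB, Finset.sum_mul, Finset.mul_sum]
    _ = ∑ i, ∑ l, ∑ j, u i * (p l i * w l j * v j) := by
        apply Finset.sum_congr rfl; intro i _; rw [Finset.sum_comm]
    _ = ∑ l, ∑ i, ∑ j, u i * (p l i * w l j * v j) := Finset.sum_comm
    _ = ∑ l, (u ⬝ᵥ p l) * (w l ⬝ᵥ v) := by
        apply Finset.sum_congr rfl; intro l _
        rw [dotProduct, dotProduct, Finset.sum_mul_sum]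
        apply Finset.sum_congr rfl; intro i _
        apply Finset.sum_congr rfl; intro j _; ring

lemma pairing_expand {m : ℕ} (B : Matrix (Fin N1) (Fin N2) ℝ)
    (x : Fin m → Fin N1 → ℝ) (y : Fin m → Fin N2 → ℝ) :
    ∑ k, x k ⬝ᵥ (B *ᵥ y k)
      = ∑ l, ∑ k, (x k ⬝ᵥ (B *ᵥ evec B l)) * (evec B l ⬝ᵥ y k) := by
  have h : ∀ k, x k ⬝ᵥ (B *ᵥ y k)
      = ∑ l, (x k ⬝ᵥ (B *ᵥ evec B l)) * (evec B l ⬝ᵥ y k) :=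
    fun k => dot_mulVec_expand B (fun l => B *ᵥ evec B l) (evec B) (matrix_repr B) (x k) (y k)
  simp_rw [h]
  rw [Finset.sum_comm]

lemma term_le {m : ℕ} (B : Matrix (Fin N1) (Fin N2) ℝ)
    (x : Fin m → Fin N1 → ℝ) (y : Fin m → Fin N2 → ℝ) (hx : ONF x) (hy : ONF y) (l : Fin N2) :
    ∑ k, (x k ⬝ᵥ (B *ᵥ evec B l)) * (evec B l ⬝ᵥ y k) ≤ Real.sqrt (ev B l) := by
  have h1 : ∑ k, (x k ⬝ᵥ (B *ᵥ evec B l)) ^ 2 ≤ ev B l := by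
    have := bessel_le hx (B *ᵥ evec B l)
    rwa [Av_dot_Av, if_pos rfl] at this
  have h2 : ∑ k, (evec B l ⬝ᵥ y k) ^ 2 ≤ 1 := by
    have := bessel_le hy (evec B l)
    rw [evec_dot, if_pos rfl] at this
    have hc : ∀ k, (evec B l ⬝ᵥ y k) ^ 2 = (y k ⬝ᵥ evec B l) ^ 2 := by
      intro k; rw [dotProduct_comm]
    simp_rw [hc]; exact this
  calc ∑ k, (x k ⬝ᵥ (B *ᵥ evec B l)) * (evec B l ⬝ᵥ y k)
      ≤ Real.sqrt (∑ k, (x k ⬝ᵥ (B *ᵥ evec B l)) ^ 2) *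
        Real.sqrt (∑ k, (evec B l ⬝ᵥ y k) ^ 2) :=
        Real.sum_mul_le_sqrt_mul_sqrt _ _ _
    _ ≤ Real.sqrt (ev B l) * Real.sqrt 1 := by
        apply mul_le_mul (Real.sqrt_le_sqrt h1) (Real.sqrt_le_sqrt h2)
          (Real.sqrt_nonneg _) (Real.sqrt_nonneg _)
    _ = Real.sqrt (ev B l) := by simp

lemma key_le {m : ℕ} (B : Matrix (Fin N1) (Fin N2) ℝ)
    (x : Fin m → Fin N1 → ℝ) (y : Fin m → Fin N2 → ℝ) (hx : ONF x) (hy : ONF y) :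
    ∑ k, x k ⬝ᵥ (B *ᵥ y k) ≤ nucl B := by
  rw [pairing_expand]
  exact Finset.sum_le_sum fun l _ => term_le B x y hx hy l

lemma attain (A : Matrix (Fin N1) (Fin N2) ℝ) :
    ∃ x : Fin N2 → Fin N1 → ℝ, ∃ y : Fin N2 → Fin N2 → ℝ,
      ONF x ∧ ONF y ∧ ∑ k, x k ⬝ᵥ (A *ᵥ y k) = nucl A := by
  refine ⟨fun k => if ev A k = 0 then 0 else (Real.sqrt (ev A k))⁻¹ • (A *ᵥ evec A k),
    evec A, ⟨?_, ?_⟩, ⟨?_, ?_⟩, ?_⟩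
  · intro k k' hkk'
    by_cases h : ev A k = 0 <;> by_cases h' : ev A k' = 0 <;>
      simp [h, h', dotProduct_smul, smul_dotProduct, Av_dot_Av, hkk']
  · intro k
    by_cases h : ev A k = 0
    · right; simp [h]
    · left
      simp only [if_neg h, dotProduct_smul, smul_dotProduct, Av_dot_Av, if_pos rfl]
      have hpos : 0 < ev A k := lt_of_le_of_ne (ev_nonneg A k) (Ne.symm h)
      rw [smul_eq_mul, smul_eq_mul, ← mul_assoc]
      rw [← Real.sqrt_mul_self (le_of_lt hpos)]
      field_simp
      rw [if_pos trivial, Real.sq_sqrt (Real.sqrt_nonneg _)]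
  · intro k k' hkk'; rw [evec_dot, if_neg hkk']
  · intro k; left; rw [evec_dot, if_pos rfl]
  · apply Finset.sum_congr rfl
    intro k _
    by_cases h : ev A k = 0
    · simp [h, Real.sqrt_eq_zero', le_of_eq h.symm]
    · simp only [if_neg h, smul_dotProduct, Av_dot_Av, if_pos rfl, smul_eq_mul]
      have hpos : 0 < ev A k := lt_of_le_of_ne (ev_nonneg A k) (Ne.symm h)
      rw [← Real.sqrt_mul_self (le_of_lt hpos)]
      field_simp
      rw [if_pos trivial, Real.sq_sqrt (Real.sqrt_nonneg _)]


lemma nucl_def (B : Matrix (Fin N1) (Fin N2) ℝ) : nucl B = ∑ l, Real.sqrt (ev B l) := rfl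

lemma key_eq {m : ℕ} (B : Matrix (Fin N1) (Fin N2) ℝ)
    (x : Fin m → Fin N1 → ℝ) (y : Fin m → Fin N2 → ℝ) (hx : ONF x) (hy : ONF y)
    (heq : ∑ k, x k ⬝ᵥ (B *ᵥ y k) = nucl B) :
    ∃ C : Fin m → Fin m → ℝ, (∀ k k', C k k' = C k' k) ∧
      (∀ k k', x k = 0 ∨ y k' = 0 → C k k' = 0) ∧
      (∀ i j, B i j = ∑ k, ∑ k', C k k' * (x k i * y k' j)) := by
  classical
  set p : Fin N2 → Fin N1 → ℝ := fun l => B *ᵥ evec B l with hp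
  set bb : Fin N2 → Fin m → ℝ := fun l k => evec B l ⬝ᵥ y k with hbb
  have hTsum : ∑ l, (∑ k, (x k ⬝ᵥ p l) * bb l k) = ∑ l, Real.sqrt (ev B l) := by
    rw [← pairing_expand B x y, heq, nucl_def]
  have hTeq : ∀ l : Fin N2, (∑ k, (x k ⬝ᵥ p l) * bb l k) = Real.sqrt (ev B l) :=
    fun l => (Finset.sum_eq_sum_iff_of_le fun l _ => term_le B x y hx hy l).mp
      hTsum l (Finset.mem_univ l)
  have hpp : ∀ l, p l ⬝ᵥ p l = ev B l := by
    intro l; rw [hp]; simp only []; rw [Av_dot_Av, if_pos rfl]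
  have hb2le : ∀ l, ∑ k, (bb l k) ^ 2 ≤ 1 := by
    intro l
    have h := bessel_le hy (evec B l)
    rw [evec_dot, if_pos rfl] at h
    have : ∀ k, (bb l k) ^ 2 = (y k ⬝ᵥ evec B l) ^ 2 := by
      intro k; rw [hbb]; simp only []; rw [dotProduct_comm]
    simp_rw [this]; exact h
  -- per-l equality analysis
  have main : ∀ l, ev B l ≠ 0 →
      (∀ k, x k ⬝ᵥ p l = Real.sqrt (ev B l) * bb l k) ∧
      (∀ i, p l i = ∑ k, (Real.sqrt (ev B l) * bb l k) * x k i) ∧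
      (∀ j, evec B l j = ∑ k, bb l k * y k j) := by
    intro l hne
    have hpos : 0 < ev B l := lt_of_le_of_ne (ev_nonneg B l) (Ne.symm hne)
    set s := Real.sqrt (ev B l) with hs
    have hs2 : s * s = ev B l := Real.mul_self_sqrt (le_of_lt hpos)
    have hspos : 0 < s := Real.sqrt_pos.mpr hpos
    set c : Fin m → ℝ := fun k => x k ⬝ᵥ p l with hc
    set d : Fin m → ℝ := fun k => s * bb l k with hd
    have hcd : ∑ k, c k * d k = ev B l := by
      have : ∀ k, c k * d k = s * (c k * bb l k) := by intro k; rw [hd]; ring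
      simp_rw [this]
      rw [← Finset.mul_sum, hTeq l, ← hs, hs2]
    have hc2 : ∑ k, c k ^ 2 ≤ ev B l := by
      have := bessel_le hx (p l); rwa [hpp l] at this
    have hd2 : ∑ k, d k ^ 2 ≤ ev B l := by
      have : ∀ k, d k ^ 2 = ev B l * (bb l k) ^ 2 := by
        intro k; rw [hd]; simp only []; rw [← hs2]; ring
      simp_rw [this]
      rw [← Finset.mul_sum]
      calc ev B l * ∑ k, (bb l k) ^ 2 ≤ ev B l * 1 :=
            mul_le_mul_of_nonneg_left (hb2le l) (le_of_lt hpos)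
        _ = ev B l := mul_one _
    have hsq : ∑ k, (c k - d k) ^ 2 = ∑ k, c k ^ 2 + ∑ k, d k ^ 2 - 2 * ∑ k, c k * d k := by
      have : ∀ k, (c k - d k) ^ 2 = c k ^ 2 + d k ^ 2 - 2 * (c k * d k) := by intro k; ring
      simp_rw [this]
      rw [Finset.sum_sub_distrib, Finset.sum_add_distrib, Finset.mul_sum]
    have hzero : ∑ k, (c k - d k) ^ 2 = 0 := by
      have h1 : ∑ k, (c k - d k) ^ 2 ≤ 0 := by rw [hsq, hcd]; linarith
      have h2 : 0 ≤ ∑ k, (c k - d k) ^ 2 := Finset.sum_nonneg fun k _ => sq_nonneg _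
      linarith
    have hcdk : ∀ k, c k = d k := by
      intro k
      have := (Finset.sum_eq_zero_iff_of_nonneg (fun k _ => sq_nonneg (c k - d k))).mp
        hzero k (Finset.mem_univ k)
      have := pow_eq_zero_iff (n := 2) (by norm_num) |>.mp this
      linarith [this]
    have hc2eq : ∑ k, c k ^ 2 = ev B l := by
      rw [hsq, hcd] at hzero; linarith
    have hd2eq : ∑ k, d k ^ 2 = ev B l := by
      rw [hsq, hcd] at hzero; linarith
    have hb2eq : ∑ k, (bb l k) ^ 2 = 1 := by
      have : ∀ k, d k ^ 2 = ev B l * (bb l k) ^ 2 := by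
        intro k; rw [hd]; simp only []; rw [← hs2]; ring
      rw [Finset.sum_congr rfl (fun k _ => this k), ← Finset.mul_sum] at hd2eq
      exact mul_left_cancel₀ hne (hd2eq.trans (mul_one (ev B l)).symm)
    refine ⟨hcdk, ?_, ?_⟩
    · have := bessel_eq hx (p l) (by rw [hpp l]; exact hc2eq)
      intro i
      rw [this i]
      apply Finset.sum_congr rfl; intro k _
      rw [show x k ⬝ᵥ p l = c k from rfl, hcdk k, hd]
    · have hyb : ∑ k, (y k ⬝ᵥ evec B l) ^ 2 = evec B l ⬝ᵥ evec B l := by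
        rw [evec_dot, if_pos rfl]
        rw [← hb2eq]
        apply Finset.sum_congr rfl; intro k _
        rw [hbb]; simp only []; rw [dotProduct_comm]
      have := bessel_eq hy (evec B l) hyb
      intro j
      rw [this j]
      apply Finset.sum_congr rfl; intro k _
      rw [hbb]; simp only []; rw [dotProduct_comm]
  have hp0 : ∀ l, ev B l = 0 → p l = 0 := by
    intro l h0
    have := hpp l
    rw [h0] at this
    exact dotProduct_self_eq_zero.mp this
  refine ⟨fun k k' => ∑ l, Real.sqrt (ev B l) * (bb l k * bb l k'), ?_, ?_, ?_⟩
  · intro k k'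
    apply Finset.sum_congr rfl; intro l _; ring
  · intro k k' hor
    apply Finset.sum_eq_zero; intro l _
    rcases hor with h | h
    · by_cases hev : ev B l = 0
      · rw [hev, Real.sqrt_zero, zero_mul]
      · have := (main l hev).1 k
        rw [h, zero_dotProduct] at this
        rcases mul_eq_zero.mp this.symm with h2 | h2
        · rw [h2, zero_mul]
        · rw [h2]; ring
    · have : bb l k' = 0 := by rw [hbb]; simp only []; rw [h, dotProduct_zero]
      rw [this]; ring
  · intro i j
    have hrepr := matrix_repr B i j
    have hterm : ∀ l, p l i * evec B l j
        = ∑ k, ∑ k', (Real.sqrt (ev B l) * (bb l k * bb l k')) * (x k i * y k' j) := by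
      intro l
      by_cases hev : ev B l = 0
      · have h0 := hp0 l hev
        rw [h0]
        simp [hev]
      · obtain ⟨_, h1, h2⟩ := main l hev
        rw [h1 i, h2 j, Finset.sum_mul_sum]
        apply Finset.sum_congr rfl; intro k _
        apply Finset.sum_congr rfl; intro k' _
        ring
    rw [show B i j = ∑ l, p l i * evec B l j from hrepr]
    rw [Finset.sum_congr rfl fun l _ => hterm l]
    rw [Finset.sum_comm]
    apply Finset.sum_congr rfl; intro k _
    rw [Finset.sum_comm]
    apply Finset.sum_congr rfl; intro k' _
    rw [← Finset.sum_mul]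

end Key


section NormProps

lemma eig_congr {n : ℕ} {M1 M2 : Matrix (Fin n) (Fin n) ℝ} (h : M1 = M2)
    (h1 : M1.IsHermitian) (h2 : M2.IsHermitian) : h1.eigenvalues = h2.eigenvalues := by
  subst h; rfl

lemma nucl_neg (A : Matrix (Fin N1) (Fin N2) ℝ) : nucl (-A) = nucl A := by
  unfold nucl ev
  rw [eig_congr (show (-A)ᴴ * (-A) = Aᴴ * A by simp)
    (Matrix.isHermitian_conjTranspose_mul_self (-A)) (Matrix.isHermitian_conjTranspose_mul_self A)]

lemma nucl_add_le (A B : Matrix (Fin N1) (Fin N2) ℝ) : nucl (A + B) ≤ nucl A + nucl B := by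
  obtain ⟨x, y, hx, hy, hatt⟩ := attain (A + B)
  have hsplit : ∑ k, x k ⬝ᵥ ((A + B) *ᵥ y k)
      = (∑ k, x k ⬝ᵥ (A *ᵥ y k)) + ∑ k, x k ⬝ᵥ (B *ᵥ y k) := by
    rw [← Finset.sum_add_distrib]
    apply Finset.sum_congr rfl; intro k _
    rw [Matrix.add_mulVec, dotProduct_add]
  have h1 := key_le A x y hx hy
  have h2 := key_le B x y hx hy
  rw [← hatt, hsplit]
  linarith

lemma nucl_smul {t : ℝ} (ht : 0 ≤ t) (A : Matrix (Fin N1) (Fin N2) ℝ) :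
    nucl (t • A) = t * nucl A := by
  have hle : nucl (t • A) ≤ t * nucl A := by
    obtain ⟨x, y, hx, hy, hatt⟩ := attain (t • A)
    have hsplit : ∑ k, x k ⬝ᵥ ((t • A) *ᵥ y k) = t * ∑ k, x k ⬝ᵥ (A *ᵥ y k) := by
      rw [Finset.mul_sum]
      apply Finset.sum_congr rfl; intro k _
      rw [Matrix.smul_mulVec, dotProduct_smul, smul_eq_mul]
    rw [← hatt, hsplit]
    exact mul_le_mul_of_nonneg_left (key_le A x y hx hy) ht
  have hge : t * nucl A ≤ nucl (t • A) := by
    obtain ⟨x, y, hx, hy, hatt⟩ := attain A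
    have hsplit : ∑ k, x k ⬝ᵥ ((t • A) *ᵥ y k) = t * ∑ k, x k ⬝ᵥ (A *ᵥ y k) := by
      rw [Finset.mul_sum]
      apply Finset.sum_congr rfl; intro k _
      rw [Matrix.smul_mulVec, dotProduct_smul, smul_eq_mul]
    have := key_le (t • A) x y hx hy
    rw [hsplit, hatt] at this
    exact this
  linarith

lemma nucl_smul_abs (t : ℝ) (A : Matrix (Fin N1) (Fin N2) ℝ) :
    nucl (t • A) = |t| * nucl A := by
  rcases le_or_gt 0 t with ht | ht
  · rw [nucl_smul ht, abs_of_nonneg ht]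
  · have h1 : t • A = -((-t) • A) := by rw [neg_smul, neg_neg]
    rw [h1, nucl_neg, nucl_smul (by linarith), abs_of_neg ht]

lemma nucl_convex_comb (A B : Matrix (Fin N1) (Fin N2) ℝ) {a b : ℝ}
    (ha : 0 ≤ a) (hb : 0 ≤ b) :
    nucl (a • A + b • B) ≤ a * nucl A + b * nucl B := by
  calc nucl (a • A + b • B) ≤ nucl (a • A) + nucl (b • B) := nucl_add_le _ _
    _ = a * nucl A + b * nucl B := by rw [nucl_smul ha, nucl_smul hb]

lemma entry_sum_le (hN1 : 0 < N1) (hN2 : 0 < N2) (A : Matrix (Fin N1) (Fin N2) ℝ) :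
    (∑ i, ∑ j, A i j) ≤ Real.sqrt ((N1 : ℝ) * N2) * nucl A := by
  have hs1 : (0:ℝ) < Real.sqrt N1 := Real.sqrt_pos.mpr (by exact_mod_cast hN1)
  have hs2 : (0:ℝ) < Real.sqrt N2 := Real.sqrt_pos.mpr (by exact_mod_cast hN2)
  set x : Fin 1 → Fin N1 → ℝ := fun _ _ => (Real.sqrt N1)⁻¹ with hxdef
  set y : Fin 1 → Fin N2 → ℝ := fun _ _ => (Real.sqrt N2)⁻¹ with hydef
  have hx : ONF x := by
    constructor
    · intro k k' hkk'; exact absurd (Subsingleton.elim k k') hkk'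
    · intro k; left
      simp only [hxdef, dotProduct]
      rw [Finset.sum_const, Finset.card_univ, Fintype.card_fin, nsmul_eq_mul]
      rw [← Real.sqrt_mul_self (le_of_lt (by exact_mod_cast hN1 : (0:ℝ) < N1))]
      field_simp
      rw [Real.sq_sqrt (Real.sqrt_nonneg _)]
  have hy : ONF y := by
    constructor
    · intro k k' hkk'; exact absurd (Subsingleton.elim k k') hkk'
    · intro k; left
      simp only [hydef, dotProduct]
      rw [Finset.sum_const, Finset.card_univ, Fintype.card_fin, nsmul_eq_mul]
      rw [← Real.sqrt_mul_self (le_of_lt (by exact_mod_cast hN2 : (0:ℝ) < N2))]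
      field_simp
      rw [Real.sq_sqrt (Real.sqrt_nonneg _)]
  have key := key_le A x y hx hy
  rw [Fin.sum_univ_one] at key
  have hpair : x 0 ⬝ᵥ (A *ᵥ y 0) = (Real.sqrt N1)⁻¹ * ((Real.sqrt N2)⁻¹ * ∑ i, ∑ j, A i j) := by
    simp only [hxdef, hydef, dotProduct, Matrix.mulVec, Finset.mul_sum]
    apply Finset.sum_congr rfl; intro i _
    apply Finset.sum_congr rfl; intro j _
    ring
  rw [hpair] at key
  have hmul : Real.sqrt ((N1 : ℝ) * N2) = Real.sqrt N1 * Real.sqrt N2 :=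
    Real.sqrt_mul (by positivity) _
  rw [hmul]
  have := mul_le_mul_of_nonneg_left key (le_of_lt (mul_pos hs1 hs2))
  calc (∑ i, ∑ j, A i j)
      = Real.sqrt N1 * Real.sqrt N2 *
        ((Real.sqrt N1)⁻¹ * ((Real.sqrt N2)⁻¹ * ∑ i, ∑ j, A i j)) := by
        field_simp
    _ ≤ Real.sqrt N1 * Real.sqrt N2 * nucl A := this

lemma abs_entry_sum_le (hN1 : 0 < N1) (hN2 : 0 < N2) (A : Matrix (Fin N1) (Fin N2) ℝ) :
    |∑ i, ∑ j, A i j| ≤ Real.sqrt ((N1 : ℝ) * N2) * nucl A := by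
  rw [abs_le]
  constructor
  · have h := entry_sum_le hN1 hN2 (-A)
    rw [nucl_neg] at h
    have : (∑ i, ∑ j, (-A) i j) = -∑ i, ∑ j, A i j := by
      simp [Matrix.neg_apply, Finset.sum_neg_distrib]
    rw [this] at h
    linarith
  · exact entry_sum_le hN1 hN2 A

end NormProps


section Extract

lemma sum_factor {m n : ℕ} (f : Fin m → ℝ) (w : Fin m → Fin n → ℝ) (v : Fin n → ℝ) :
    ∑ j, (∑ k2, f k2 * w k2 j) * v j = ∑ k2, f k2 * (w k2 ⬝ᵥ v) := by
  simp only [Finset.sum_mul]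
  rw [Finset.sum_comm]
  apply Finset.sum_congr rfl; intro k2 _
  rw [dotProduct, Finset.mul_sum]
  apply Finset.sum_congr rfl; intro j _; ring

lemma rep_extract {m : ℕ} {x : Fin m → Fin N1 → ℝ} {y : Fin m → Fin N2 → ℝ}
    (hx : ONF x) (hy : ONF y) (D : Fin m → Fin m → ℝ) (J : Matrix (Fin N1) (Fin N2) ℝ)
    (hrep : ∀ i j, J i j = ∑ k1, ∑ k2, D k1 k2 * (x k1 i * y k2 j))
    (k k' : Fin m) (hxk : x k ⬝ᵥ x k = 1) (hyk : y k' ⬝ᵥ y k' = 1) :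
    x k ⬝ᵥ (J *ᵥ y k') = D k k' := by
  have hJv : ∀ i, (J *ᵥ y k') i = ∑ k1, D k1 k' * x k1 i := by
    intro i
    have h0 : (J *ᵥ y k') i = ∑ j, J i j * y k' j := rfl
    rw [h0]
    have h1 : ∀ j, J i j * y k' j = (∑ k2, (∑ k1, D k1 k2 * x k1 i) * y k2 j) * y k' j := by
      intro j
      rw [hrep]
      congr 1
      rw [Finset.sum_comm]
      apply Finset.sum_congr rfl; intro k2 _
      rw [Finset.sum_mul]
      apply Finset.sum_congr rfl; intro k1 _; ring
    simp_rw [h1]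
    rw [sum_factor (fun k2 => ∑ k1, D k1 k2 * x k1 i) y (y k')]
    rw [Finset.sum_eq_single k']
    · rw [hyk, mul_one]
    · intro k2 _ hk2
      rw [hy.1 k2 k' hk2, mul_zero]
    · intro h; exact absurd (Finset.mem_univ k') h
  have h2 : x k ⬝ᵥ (J *ᵥ y k') = ∑ k1, D k1 k' * (x k ⬝ᵥ x k1) := by
    rw [dotProduct]
    simp_rw [hJv, Finset.mul_sum]
    rw [Finset.sum_comm]
    apply Finset.sum_congr rfl; intro k1 _
    rw [dotProduct, Finset.mul_sum]
    apply Finset.sum_congr rfl; intro i _; ring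
  rw [h2, Finset.sum_eq_single k]
  · rw [hxk, mul_one]
  · intro k1 _ hk1
    rw [hx.1 k k1 (Ne.symm hk1), mul_zero]
  · intro h; exact absurd (Finset.mem_univ k) h

lemma ones_dot (u : Fin N1 → ℝ) (v : Fin N2 → ℝ) :
    u ⬝ᵥ (((fun _ _ => (1:ℝ)) : Matrix (Fin N1) (Fin N2) ℝ) *ᵥ v)
      = (∑ i, u i) * (∑ j, v j) := by
  simp only [dotProduct, Matrix.mulVec, one_mul, Finset.sum_mul]

end Extract

end NMCAux

private lemma nuclNorm_eq_nucl (A : Mat n1 n2) : nuclNorm A = NMCAux.nucl A := rfl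

private lemma g_convex (M : Mat n1 n2) :
    ConvexOn ℝ Set.univ (fun c : ℝ => nuclNorm (oplus M c)) := by
  refine ⟨convex_univ, ?_⟩
  intro c1 _ c2 _ a b ha hb hab
  simp only [smul_eq_mul]
  have hcomb : oplus M (a * c1 + b * c2) = a • (oplus M c1) + b • (oplus M c2) := by
    ext i j
    simp only [oplus, Matrix.add_apply, Matrix.smul_apply, smul_eq_mul]
    linear_combination M i j * hab.symm
  rw [nuclNorm_eq_nucl, nuclNorm_eq_nucl, nuclNorm_eq_nucl, hcomb]
  exact NMCAux.nucl_convex_comb _ _ ha hb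

private lemma g_continuous (M : Mat n1 n2) :
    Continuous (fun c : ℝ => nuclNorm (oplus M c)) := by
  set J : Mat n1 n2 := fun _ _ => (1:ℝ) with hJ
  set K : ℝ := NMCAux.nucl J with hK
  have hK0 : 0 ≤ K := NMCAux.nucl_nonneg J
  have key : ∀ c c' : ℝ, nuclNorm (oplus M c) ≤ nuclNorm (oplus M c') + |c - c'| * K := by
    intro c c'
    have hdec : oplus M c = oplus M c' + (c - c') • J := by
      ext i j
      simp only [oplus, Matrix.add_apply, Matrix.smul_apply, hJ, smul_eq_mul, mul_one]
      show _ = _ + (c - c') * 1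
      ring
    rw [nuclNorm_eq_nucl, nuclNorm_eq_nucl, hdec]
    calc NMCAux.nucl (oplus M c' + (c - c') • J)
        ≤ NMCAux.nucl (oplus M c') + NMCAux.nucl ((c - c') • J) := NMCAux.nucl_add_le _ _
      _ = NMCAux.nucl (oplus M c') + |c - c'| * K := by rw [NMCAux.nucl_smul_abs]
  have hlip : LipschitzWith (Real.toNNReal K) (fun c : ℝ => nuclNorm (oplus M c)) := by
    rw [lipschitzWith_iff_dist_le_mul]
    intro c c'
    rw [Real.dist_eq, Real.dist_eq, Real.coe_toNNReal K hK0, abs_sub_le_iff]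
    constructor
    · have h := key c c'
      nlinarith [abs_nonneg (c - c'), hK0]
    · have h := key c' c
      rw [abs_sub_comm c' c] at h
      nlinarith [abs_nonneg (c - c'), hK0]
  exact hlip.continuous

private lemma g_lower (hn1 : 0 < n1) (hn2 : 0 < n2) (M : Mat n1 n2) (c : ℝ) :
    |(∑ i, ∑ j, M i j) + ((n1 : ℝ) * n2) * c| ≤
      Real.sqrt ((n1 : ℝ) * n2) * nuclNorm (oplus M c) := by
  have h := NMCAux.abs_entry_sum_le hn1 hn2 (oplus M c)
  have hsum : (∑ i, ∑ j, (oplus M c) i j) = (∑ i, ∑ j, M i j) + ((n1 : ℝ) * n2) * c := by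
    simp only [oplus]
    simp only [Finset.sum_add_distrib]
    simp [Finset.sum_const, Finset.card_univ, mul_assoc]
  rw [hsum] at h
  rw [nuclNorm_eq_nucl]
  exact h

private lemma exists_min (hn1 : 0 < n1) (hn2 : 0 < n2) (M : Mat n1 n2) :
    ∃ c : ℝ, IsMinShift M c := by
  set g : ℝ → ℝ := fun c => nuclNorm (oplus M c) with hg
  have hcont : Continuous g := g_continuous M
  set S : ℝ := ∑ i, ∑ j, M i j with hS
  set Q : ℝ := (n1 : ℝ) * n2 with hQ
  have hQ0 : 0 < Q := by
    rw [hQ]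
    have h1 : (0:ℝ) < n1 := by exact_mod_cast hn1
    have h2 : (0:ℝ) < n2 := by exact_mod_cast hn2
    exact mul_pos h1 h2
  have hsq : 0 < Real.sqrt Q := Real.sqrt_pos.mpr hQ0
  set R : ℝ := (Real.sqrt Q * g 0 + |S|) / Q + 1 with hR
  have hg0 : 0 ≤ g 0 := NMCAux.nucl_nonneg _
  have hR0 : 0 < R := by
    have hnum : 0 ≤ Real.sqrt Q * g 0 + |S| := by positivity
    have := div_nonneg hnum (le_of_lt hQ0)
    rw [hR]; linarith
  have hout : ∀ c : ℝ, c ∉ Set.Icc (-R) R → g 0 < g c := by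
    intro c hc
    have habs : R < |c| := by
      rw [Set.mem_Icc, not_and_or] at hc
      rcases hc with h | h
      · push_neg at h
        rw [abs_of_neg (by linarith)]
        linarith
      · push_neg at h
        rw [abs_of_pos (by linarith)]
        exact h
    have hlow := g_lower hn1 hn2 M c
    rw [← hS, ← hQ] at hlow
    have h1 : Q * |c| - |S| ≤ |S + Q * c| := by
      have habs2 : |Q * c| ≤ |S + Q * c| + |S| := by
        have := abs_sub_abs_le_abs_sub (S + Q * c) S
        have h3 : |S + Q * c - S| = |Q * c| := by ring_nf
        calc |Q * c| = |S + Q * c - S| := by ring_nf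
          _ ≤ |S + Q * c| + |S| := abs_sub _ _
      rw [abs_mul, abs_of_pos hQ0] at habs2
      linarith
    have hQR : Q * R = Real.sqrt Q * g 0 + |S| + Q := by
      rw [hR]; field_simp
    have h2 : Real.sqrt Q * g 0 + Q < Q * |c| - |S| := by
      have := mul_lt_mul_of_pos_left habs hQ0
      linarith
    have h3 : Real.sqrt Q * g 0 < Real.sqrt Q * g c := by
      have h4 : |S + Q * c| ≤ Real.sqrt Q * g c := hlow
      linarith
    exact lt_of_mul_lt_mul_left h3 (le_of_lt hsq)
  have hmem0 : (0:ℝ) ∈ Set.Icc (-R) R := ⟨by linarith, by linarith⟩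
  obtain ⟨c0, hc0mem, hc0min⟩ :=
    isCompact_Icc.exists_isMinOn ⟨0, hmem0⟩ hcont.continuousOn
  refine ⟨c0, fun c' => ?_⟩
  show g c0 ≤ g c'
  by_cases hmem : c' ∈ Set.Icc (-R) R
  · exact isMinOn_iff.mp hc0min c' hmem
  · have h1 : g c0 ≤ g 0 := isMinOn_iff.mp hc0min 0 hmem0
    have h2 := hout c' hmem
    linarith

private lemma min_unique (hn1 : 0 < n1) (hn2 : 0 < n2) (M : Mat n1 n2)
    {d1 d2 : ℝ} (hlt : d1 < d2) (h1 : IsMinShift M d1) (h2 : IsMinShift M d2) : False := by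
  classical
  set g : ℝ → ℝ := fun c => NMCAux.nucl (oplus M c) with hg
  have hgmin1 : ∀ c, g d1 ≤ g c := h1
  have hgmin2 : ∀ c, g d2 ≤ g c := h2
  set m0 : ℝ := g d1 with hm0
  have hm2 : g d2 = m0 := le_antisymm (hgmin2 d1) (hgmin1 d2)
  set c : ℝ := (d1 + d2) / 2 with hc
  have hmid : g c = m0 := by
    have hconv := (g_convex M).2 (Set.mem_univ d1) (Set.mem_univ d2)
      (by norm_num : (0:ℝ) ≤ 1/2) (by norm_num : (0:ℝ) ≤ 1/2) (by norm_num : (1/2:ℝ) + 1/2 = 1)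
    simp only [smul_eq_mul] at hconv
    have heq : (1/2 : ℝ) * d1 + (1/2 : ℝ) * d2 = c := by rw [hc]; ring
    rw [heq] at hconv
    have hconv' : g c ≤ (1/2:ℝ) * g d1 + (1/2:ℝ) * g d2 := hconv
    refine le_antisymm ?_ (hgmin1 c)
    rw [hm2] at hconv'
    rw [hm0] at hconv' ⊢
    linarith
  set Bp : Mat n1 n2 := oplus M d2 with hBp
  set Bm : Mat n1 n2 := oplus M d1 with hBm
  set X : Mat n1 n2 := oplus M c with hX
  have hBsum : Bp + Bm = (2:ℝ) • X := by
    ext i j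
    simp only [hBp, hBm, hX, oplus, Matrix.add_apply, Matrix.smul_apply, smul_eq_mul, hc]
    ring
  obtain ⟨x, y, hx, hy, hatt⟩ := NMCAux.attain (Bp + Bm)
  have hnuclsum : NMCAux.nucl (Bp + Bm) = 2 * m0 := by
    rw [hBsum, NMCAux.nucl_smul (by norm_num : (0:ℝ) ≤ 2)]
    have : NMCAux.nucl X = m0 := hmid
    rw [this]
  have hsplit : ∑ k, x k ⬝ᵥ ((Bp + Bm) *ᵥ y k)
      = (∑ k, x k ⬝ᵥ (Bp *ᵥ y k)) + ∑ k, x k ⬝ᵥ (Bm *ᵥ y k) := by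
    rw [← Finset.sum_add_distrib]
    apply Finset.sum_congr rfl; intro k _
    rw [Matrix.add_mulVec, dotProduct_add]
  have hBpm0 : NMCAux.nucl Bp = m0 := hm2
  have hBmm0 : NMCAux.nucl Bm = m0 := rfl
  have hSp_le : ∑ k, x k ⬝ᵥ (Bp *ᵥ y k) ≤ m0 := by
    have := NMCAux.key_le Bp x y hx hy
    rwa [hBpm0] at this
  have hSm_le : ∑ k, x k ⬝ᵥ (Bm *ᵥ y k) ≤ m0 := by
    have := NMCAux.key_le Bm x y hx hy
    rwa [hBmm0] at this
  have hsum2 : (∑ k, x k ⬝ᵥ (Bp *ᵥ y k)) + ∑ k, x k ⬝ᵥ (Bm *ᵥ y k) = 2 * m0 := by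
    rw [← hsplit, hatt, hnuclsum]
  have hSp : ∑ k, x k ⬝ᵥ (Bp *ᵥ y k) = NMCAux.nucl Bp := by rw [hBpm0]; linarith
  have hSm : ∑ k, x k ⬝ᵥ (Bm *ᵥ y k) = NMCAux.nucl Bm := by rw [hBmm0]; linarith
  obtain ⟨Cp, hCp_symm, hCp_zero, hCp_rep⟩ := NMCAux.key_eq Bp x y hx hy hSp
  obtain ⟨Cm, hCm_symm, hCm_zero, hCm_rep⟩ := NMCAux.key_eq Bm x y hx hy hSm
  set J : Mat n1 n2 := fun _ _ => (1:ℝ) with hJ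
  have hd : d2 - d1 ≠ 0 := ne_of_gt (by linarith)
  set D : Fin n2 → Fin n2 → ℝ := fun k k' => (Cp k k' - Cm k k') / (d2 - d1) with hD
  have hJrep : ∀ i j, J i j = ∑ k1, ∑ k2, D k1 k2 * (x k1 i * y k2 j) := by
    intro i j
    have hdiff : Bp i j - Bm i j = d2 - d1 := by
      simp only [hBp, hBm, oplus]; ring
    have hstep : ∑ k1, ∑ k2, D k1 k2 * (x k1 i * y k2 j)
        = ((∑ k1, ∑ k2, Cp k1 k2 * (x k1 i * y k2 j))
          - ∑ k1, ∑ k2, Cm k1 k2 * (x k1 i * y k2 j)) / (d2 - d1) := by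
      have hterm : ∀ k1 k2 : Fin n2, D k1 k2 * (x k1 i * y k2 j)
          = (Cp k1 k2 * (x k1 i * y k2 j) - Cm k1 k2 * (x k1 i * y k2 j)) / (d2 - d1) := by
        intro k1 k2
        rw [hD]
        field_simp
      simp_rw [hterm, ← Finset.sum_div]
      congr 1
      rw [← Finset.sum_sub_distrib]
      apply Finset.sum_congr rfl; intro k1 _
      rw [← Finset.sum_sub_distrib]
    rw [hstep, ← hCp_rep i j, ← hCm_rep i j, hdiff]
    show (1:ℝ) = (d2 - d1) / (d2 - d1)
    rw [div_self hd]
  set α : Fin n2 → ℝ := fun k => ∑ i, x k i with hα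
  set β : Fin n2 → ℝ := fun k => ∑ j, y k j with hβ
  have hones : ∀ k k' : Fin n2, x k ⬝ᵥ (J *ᵥ y k') = α k * β k' :=
    fun k k' => NMCAux.ones_dot (x k) (y k')
  have hDαβ : ∀ k k', D k k' = α k * β k' := by
    intro k k'
    by_cases hxk : x k = 0
    · have hz : D k k' = 0 := by
        rw [hD]
        show (Cp k k' - Cm k k') / (d2 - d1) = 0
        rw [hCp_zero k k' (Or.inl hxk), hCm_zero k k' (Or.inl hxk)]
        simp
      have hαz : α k = 0 := by
        rw [hα]
        show (∑ i, x k i) = 0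
        rw [hxk]
        simp
      rw [hz, hαz, zero_mul]
    · by_cases hyk : y k' = 0
      · have hz : D k k' = 0 := by
          rw [hD]
          show (Cp k k' - Cm k k') / (d2 - d1) = 0
          rw [hCp_zero k k' (Or.inr hyk), hCm_zero k k' (Or.inr hyk)]
          simp
        have hβz : β k' = 0 := by
          rw [hβ]
          show (∑ j, y k' j) = 0
          rw [hyk]
          simp
        rw [hz, hβz, mul_zero]
      · have hx1 : x k ⬝ᵥ x k = 1 := (hx.2 k).resolve_right hxk
        have hy1 : y k' ⬝ᵥ y k' = 1 := (hy.2 k').resolve_right hyk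
        have hex := NMCAux.rep_extract hx hy D J hJrep k k' hx1 hy1
        rw [← hex]
        exact hones k k'
  have htr : ∑ k, α k * β k = 0 := by
    have hBrel : Bp = Bm + (d2 - d1) • J := by
      ext i j
      simp only [hBp, hBm, hJ, oplus, Matrix.add_apply, Matrix.smul_apply, smul_eq_mul, mul_one]
      show _ = _ + (d2 - d1) * 1
      ring
    have hBpm : ∀ k, x k ⬝ᵥ (Bp *ᵥ y k) - x k ⬝ᵥ (Bm *ᵥ y k) = (d2 - d1) * (α k * β k) := by
      intro k
      rw [hBrel, Matrix.add_mulVec, dotProduct_add]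
      have hsm : x k ⬝ᵥ (((d2 - d1) • J) *ᵥ y k) = (d2 - d1) * (x k ⬝ᵥ (J *ᵥ y k)) := by
        rw [Matrix.smul_mulVec, dotProduct_smul, smul_eq_mul]
      rw [hsm, hones k k]
      ring
    have hsum0 : ∑ k, (x k ⬝ᵥ (Bp *ᵥ y k) - x k ⬝ᵥ (Bm *ᵥ y k)) = 0 := by
      rw [Finset.sum_sub_distrib, hSp, hSm, hBpm0, hBmm0, sub_self]
    rw [Finset.sum_congr rfl (fun k _ => hBpm k), ← Finset.mul_sum] at hsum0
    rcases mul_eq_zero.mp hsum0 with h | h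
    · exact absurd h hd
    · exact h
  have hsymm : ∀ k k', α k * β k' = α k' * β k := by
    intro k k'
    have e3 : D k k' = D k' k := by
      rw [hD]
      show (Cp k k' - Cm k k') / (d2 - d1) = (Cp k' k - Cm k' k) / (d2 - d1)
      rw [hCp_symm k k', hCm_symm k k']
    rw [← hDαβ k k', e3, hDαβ k' k]
  have hprod : (∑ k, (α k)^2) * (∑ k, (β k)^2) = 0 := by
    have e : (∑ k, (α k)^2) * (∑ k, (β k)^2) = (∑ k, α k * β k)^2 := by
      rw [Finset.sum_mul_sum, pow_two, Finset.sum_mul_sum]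
      apply Finset.sum_congr rfl; intro k _
      apply Finset.sum_congr rfl; intro k' _
      have h := hsymm k k'
      linear_combination (α k * β k') * h
    rw [e, htr]
    norm_num
  set i0 : Fin n1 := ⟨0, hn1⟩
  set j0 : Fin n2 := ⟨0, hn2⟩
  have hone : (1:ℝ) = (∑ k, α k * x k i0) * (∑ k, β k * y k j0) := by
    have hJv := hJrep i0 j0
    have hJ1 : J i0 j0 = 1 := rfl
    calc (1:ℝ) = ∑ k1, ∑ k2, D k1 k2 * (x k1 i0 * y k2 j0) := by rw [← hJv, hJ1]
      _ = ∑ k1, ∑ k2, (α k1 * β k2) * (x k1 i0 * y k2 j0) := by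
          apply Finset.sum_congr rfl; intro k1 _
          apply Finset.sum_congr rfl; intro k2 _
          rw [hDαβ k1 k2]
      _ = (∑ k, α k * x k i0) * (∑ k, β k * y k j0) := by
          rw [Finset.sum_mul_sum]
          apply Finset.sum_congr rfl; intro k1 _
          apply Finset.sum_congr rfl; intro k2 _
          ring
  rcases mul_eq_zero.mp hprod with h | h
  · have hall : ∀ k, α k = 0 := fun k =>
      pow_eq_zero_iff two_ne_zero |>.mp
        ((Finset.sum_eq_zero_iff_of_nonneg (fun k _ => sq_nonneg (α k))).mp h k
          (Finset.mem_univ k))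
    have hz : (∑ k, α k * x k i0) = 0 :=
      Finset.sum_eq_zero fun k _ => by rw [hall k, zero_mul]
    rw [hz, zero_mul] at hone
    exact one_ne_zero hone
  · have hall : ∀ k, β k = 0 := fun k =>
      pow_eq_zero_iff two_ne_zero |>.mp
        ((Finset.sum_eq_zero_iff_of_nonneg (fun k _ => sq_nonneg (β k))).mp h k
          (Finset.mem_univ k))
    have hz : (∑ k, β k * y k j0) = 0 :=
      Finset.sum_eq_zero fun k _ => by rw [hall k, zero_mul]
    rw [hz, mul_zero] at hone
    exact one_ne_zero hone

theorem statement12 (n1 n2 : ℕ) (hn1 : 0 < n1) (hn2 : 0 < n2) (M : Mat n1 n2) :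
    ConvexOn ℝ Set.univ (fun c : ℝ => nuclNorm (oplus M c)) ∧
    ∃! c : ℝ, IsMinShift M c := by
  constructor
  · exact g_convex M
  · obtain ⟨c0, hc0⟩ := exists_min hn1 hn2 M
    refine ⟨c0, hc0, ?_⟩
    intro c' hc'
    by_contra hne
    rcases lt_or_gt_of_ne hne with h | h
    · exact min_unique hn1 hn2 M h hc' hc0
    · exact min_unique hn1 hn2 M h hc0 hc'


end NMC
end
end
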